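/- arXiv:1610.01987 — 7 statements merged into one kernel-verified Lean document; each statement's English description precedes it below -/
import Mathlib

section
/- For every integer n ≥ 2, the number of arrangements of {1,…,n} avoiding all patterns 12, 23, …, (n−1)n equals D_{n−1} + D_n; that is, d_n = D_{n−1} + D_n. -/
/-- The arrangement (one-line notation) of `σ` avoids all patterns
`12, 23, …, (n-1)n`: digit `i` (encoded as the value `i-1` in `Fin n`)
is never immediately followed by digit `i+1`. -/
def avoidsSucc (n : ℕ) (σ : Equiv.Perm (Fin n)) : Prop :=
  ∀ (k : ℕ) (h : k + 1 < n),
    (σ ⟨k + 1, h⟩).val ≠ (σ ⟨k, Nat.lt_of_succ_lt h⟩).val + 1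

/-- The arrangement of `σ` contains the pattern `n1`: digit `n` (value `n-1`)
is immediately followed by digit `1` (value `0`). -/
def containsN1 (n : ℕ) (σ : Equiv.Perm (Fin n)) : Prop :=
  ∃ (k : ℕ) (h : k + 1 < n),
    (σ ⟨k, Nat.lt_of_succ_lt h⟩).val = n - 1 ∧ (σ ⟨k + 1, h⟩).val = 0

/-- `dCount n` = number of arrangements of `{1,…,n}` avoiding `12, 23, …, (n-1)n`. -/
noncomputable def dCount (n : ℕ) : ℕ :=
  Nat.card {σ : Equiv.Perm (Fin n) // avoidsSucc n σ}

/-- `DCount n` = number of arrangements of `{1,…,n}` avoiding `12, 23, …, (n-1)n, n1`. -/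
noncomputable def DCount (n : ℕ) : ℕ :=
  Nat.card {σ : Equiv.Perm (Fin n) // avoidsSucc n σ ∧ ¬ containsN1 n σ}

namespace AuxD2

lemma card_split {α : Type*} [Finite α] (A B : α → Prop) :
    Nat.card {x // A x} = Nat.card {x // A x ∧ B x} + Nat.card {x // A x ∧ ¬ B x} := by
  classical
  rw [← Nat.card_sum]
  apply Nat.card_congr
  exact (Equiv.sumCompl (fun y : {x // A x} => B y.val)).symm.trans
    (Equiv.sumCongr (Equiv.subtypeSubtypeEquivSubtypeInter A B)
      (Equiv.subtypeSubtypeEquivSubtypeInter A (fun a => ¬ B a)))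

variable {m : ℕ}

/-- Skip index `j`: positions `< j` stay, positions `≥ j` shift up by one. -/
def skip (j : ℕ) (p : Fin (m + 1)) : Fin (m + 2) :=
  if p.val < j then p.castSucc else p.succ

lemma skip_val (j : ℕ) (p : Fin (m + 1)) :
    (skip j p).val = if p.val < j then p.val else p.val + 1 := by
  unfold skip; split <;> simp

lemma skip_ne (j : Fin (m + 2)) (p : Fin (m + 1)) : skip j.val p ≠ j := by
  intro h
  have := congrArg Fin.val h
  rw [skip_val] at this
  split at this <;> omega

lemma skip_inj (j : ℕ) : Function.Injective (skip (m := m) j) := by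
  intro p q h
  have h' := congrArg Fin.val h
  rw [skip_val, skip_val] at h'
  apply Fin.ext
  split at h' <;> split at h' <;> omega

/-- Delete the entry `m+1` (the largest value) from the one-line word of `σ`. -/
def delFun (σ : Equiv.Perm (Fin (m + 2))) (p : Fin (m + 1)) : Fin (m + 1) :=
  ⟨(σ (skip (σ.symm (Fin.last (m + 1))).val p)).val, by
    have h1 : σ (skip (σ.symm (Fin.last (m + 1))).val p) ≠ Fin.last (m + 1) := by
      intro h
      exact skip_ne _ p (by
        have := congrArg σ.symm h
        simpa using this)
    have h2 := (σ (skip (σ.symm (Fin.last (m + 1))).val p)).isLt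
    have h3 : (σ (skip (σ.symm (Fin.last (m + 1))).val p)).val ≠ m + 1 :=
      fun hv => h1 (Fin.ext hv)
    omega⟩

lemma delFun_val (σ : Equiv.Perm (Fin (m + 2))) (p : Fin (m + 1)) :
    (delFun σ p).val = (σ (skip (σ.symm (Fin.last (m + 1))).val p)).val := rfl

lemma delFun_inj (σ : Equiv.Perm (Fin (m + 2))) : Function.Injective (delFun σ) := by
  intro p q h
  have h1 := congrArg Fin.val h
  rw [delFun_val, delFun_val] at h1
  exact skip_inj _ (σ.injective (Fin.ext h1))

noncomputable def delPerm (σ : Equiv.Perm (Fin (m + 2))) : Equiv.Perm (Fin (m + 1)) :=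
  Equiv.ofBijective (delFun σ) (Finite.injective_iff_bijective.mp (delFun_inj σ))

lemma delPerm_apply (σ : Equiv.Perm (Fin (m + 2))) (p : Fin (m + 1)) :
    delPerm σ p = delFun σ p := rfl

/-- Insert the value `m+1` just before the entry `0` in the one-line word of `τ`. -/
def insFun (τ : Equiv.Perm (Fin (m + 1))) (i : Fin (m + 2)) : Fin (m + 2) :=
  if h : i.val < (τ.symm 0).val then
    (τ ⟨i.val, h.trans (τ.symm 0).isLt⟩).castSucc
  else if i.val = (τ.symm 0).val then Fin.last (m + 1)
  else (τ ⟨i.val - 1, by have := i.isLt; omega⟩).castSucc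

lemma insFun_of_lt (τ : Equiv.Perm (Fin (m + 1))) (i : Fin (m + 2))
    (h : i.val < (τ.symm 0).val) :
    insFun τ i = (τ ⟨i.val, h.trans (τ.symm 0).isLt⟩).castSucc := by
  unfold insFun; rw [dif_pos h]

lemma insFun_of_eq (τ : Equiv.Perm (Fin (m + 1))) (i : Fin (m + 2))
    (h : i.val = (τ.symm 0).val) :
    insFun τ i = Fin.last (m + 1) := by
  unfold insFun
  rw [dif_neg (by omega), if_pos h]

lemma insFun_of_gt (τ : Equiv.Perm (Fin (m + 1))) (i : Fin (m + 2))
    (h : (τ.symm 0).val < i.val) :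
    insFun τ i = (τ ⟨i.val - 1, by have := i.isLt; omega⟩).castSucc := by
  unfold insFun
  rw [dif_neg (by omega), if_neg (by omega)]

lemma insFun_inj (τ : Equiv.Perm (Fin (m + 1))) : Function.Injective (insFun τ) := by
  intro a b hab
  rcases lt_trichotomy a.val (τ.symm 0).val with ha | ha | ha <;>
    rcases lt_trichotomy b.val (τ.symm 0).val with hb | hb | hb
  · rw [insFun_of_lt τ a ha, insFun_of_lt τ b hb] at hab
    have := congrArg Fin.val (τ.injective (Fin.castSucc_injective _ hab))
    exact Fin.ext this
  · rw [insFun_of_lt τ a ha, insFun_of_eq τ b hb] at hab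
    exact absurd hab (Fin.castSucc_lt_last _).ne
  · rw [insFun_of_lt τ a ha, insFun_of_gt τ b hb] at hab
    have := congrArg Fin.val (τ.injective (Fin.castSucc_injective _ hab))
    simp only at this
    apply Fin.ext; omega
  · rw [insFun_of_eq τ a ha, insFun_of_lt τ b hb] at hab
    exact absurd hab.symm (Fin.castSucc_lt_last _).ne
  · exact Fin.ext (ha.trans hb.symm)
  · rw [insFun_of_eq τ a ha, insFun_of_gt τ b hb] at hab
    exact absurd hab.symm (Fin.castSucc_lt_last _).ne
  · rw [insFun_of_gt τ a ha, insFun_of_lt τ b hb] at hab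
    have := congrArg Fin.val (τ.injective (Fin.castSucc_injective _ hab))
    simp only at this
    apply Fin.ext; omega
  · rw [insFun_of_gt τ a ha, insFun_of_eq τ b hb] at hab
    exact absurd hab (Fin.castSucc_lt_last _).ne
  · rw [insFun_of_gt τ a ha, insFun_of_gt τ b hb] at hab
    have := congrArg Fin.val (τ.injective (Fin.castSucc_injective _ hab))
    simp only at this
    apply Fin.ext; omega

noncomputable def insPerm (τ : Equiv.Perm (Fin (m + 1))) : Equiv.Perm (Fin (m + 2)) :=
  Equiv.ofBijective (insFun τ) (Finite.injective_iff_bijective.mp (insFun_inj τ))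

lemma insPerm_apply (τ : Equiv.Perm (Fin (m + 1))) (i : Fin (m + 2)) :
    insPerm τ i = insFun τ i := rfl

lemma sigma_at_j (σ : Equiv.Perm (Fin (m + 2)))
    (h : (σ.symm (Fin.last (m + 1))).val < m + 2) :
    σ ⟨(σ.symm (Fin.last (m + 1))).val, h⟩ = Fin.last (m + 1) := by
  have : (⟨(σ.symm (Fin.last (m + 1))).val, h⟩ : Fin (m + 2)) = σ.symm (Fin.last (m + 1)) :=
    Fin.ext rfl
  rw [this, Equiv.apply_symm_apply]

/-- If `σ` contains the pattern `n1`, the largest value sits just before `0`. -/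
lemma pattern_pos (σ : Equiv.Perm (Fin (m + 2))) (hB : containsN1 (m + 2) σ) :
    ∃ (h : (σ.symm (Fin.last (m + 1))).val + 1 < m + 2),
    (σ ⟨(σ.symm (Fin.last (m + 1))).val + 1, h⟩).val = 0 := by
  obtain ⟨k, hk, h1, h2⟩ := hB
  have hs : σ.symm (Fin.last (m + 1)) = ⟨k, Nat.lt_of_succ_lt hk⟩ := by
    rw [Equiv.symm_apply_eq]
    exact (Fin.ext h1).symm
  refine ⟨by rw [hs]; exact hk, ?_⟩
  have e : (⟨(σ.symm (Fin.last (m + 1))).val + 1, by rw [hs]; exact hk⟩ : Fin (m + 2))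
      = ⟨k + 1, hk⟩ := by
    apply Fin.ext; simp [hs]
  rw [e]; exact h2

set_option maxHeartbeats 1000000 in
/-- Deletion preserves avoidance of successor patterns. -/
lemma avoids_del (σ : Equiv.Perm (Fin (m + 2))) (hA : avoidsSucc (m + 2) σ)
    (hB : containsN1 (m + 2) σ) : avoidsSucc (m + 1) (delPerm σ) := by
  intro k hk hcon
  obtain ⟨hj1, hj2⟩ := pattern_pos σ hB
  set j : ℕ := (σ.symm (Fin.last (m + 1))).val with hJ
  rw [delPerm_apply, delPerm_apply, delFun_val, delFun_val, ← hJ] at hcon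
  have hv := hcon
  rcases lt_trichotomy (k + 1) j with hc | hc | hc
  · have e1 : skip j (⟨k + 1, hk⟩ : Fin (m + 1)) = ⟨k + 1, by omega⟩ := by
      apply Fin.ext; rw [skip_val]; simp only; rw [if_pos hc]
    have e2 : skip j (⟨k, Nat.lt_of_succ_lt hk⟩ : Fin (m + 1)) = ⟨k, by omega⟩ := by
      apply Fin.ext; rw [skip_val]; simp only; rw [if_pos (by omega)]
    rw [e1, e2] at hv
    exact hA k (by omega) hv
  · have e1 : skip j (⟨k + 1, hk⟩ : Fin (m + 1)) = ⟨j + 1, by omega⟩ := by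
      apply Fin.ext; rw [skip_val]; simp only; rw [if_neg (by omega)]; omega
    have e2 : skip j (⟨k, Nat.lt_of_succ_lt hk⟩ : Fin (m + 1)) = ⟨k, by omega⟩ := by
      apply Fin.ext; rw [skip_val]; simp only; rw [if_pos (by omega)]
    rw [e1, e2] at hv
    have hz : (σ (⟨j + 1, by omega⟩ : Fin (m + 2))).val = 0 := hj2
    omega
  · have e1 : skip j (⟨k + 1, hk⟩ : Fin (m + 1)) = ⟨k + 2, by omega⟩ := by
      apply Fin.ext; rw [skip_val]; simp only; rw [if_neg (by omega)]
    have e2 : skip j (⟨k, Nat.lt_of_succ_lt hk⟩ : Fin (m + 1)) = ⟨k + 1, by omega⟩ := by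
      apply Fin.ext; rw [skip_val]; simp only; rw [if_neg (by omega)]
    rw [e1, e2] at hv
    exact hA (k + 1) (by omega) hv

/-- Deletion gives a word avoiding the `n1` pattern. -/
lemma notN1_del (σ : Equiv.Perm (Fin (m + 2))) (hA : avoidsSucc (m + 2) σ)
    (hB : containsN1 (m + 2) σ) : ¬ containsN1 (m + 1) (delPerm σ) := by
  rintro ⟨k, hk, h1, h2⟩
  obtain ⟨hj1, hj2⟩ := pattern_pos σ hB
  set j : ℕ := (σ.symm (Fin.last (m + 1))).val with hJ
  rw [delPerm_apply, delFun_val, ← hJ] at h1 h2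
  have h1' : (σ (skip j ⟨k, Nat.lt_of_succ_lt hk⟩)).val = m := by
    have := h1; omega
  have h2' : (σ (skip j ⟨k + 1, hk⟩)).val = 0 := h2
  -- the `0` of σ sits at position j+1, hence skip j ⟨k+1⟩ = ⟨j+1⟩
  have hz : (σ (skip j ⟨k + 1, hk⟩)).val = (σ (⟨j + 1, hj1⟩ : Fin (m + 2))).val := by
    rw [h2']; exact hj2.symm
  have heq := σ.injective (Fin.ext hz)
  have hv := congrArg Fin.val heq
  rw [skip_val] at hv
  simp only [Fin.val_mk] at hv
  have hkJ : k + 1 = j := by split at hv <;> omega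
  have e2 : skip j (⟨k, Nat.lt_of_succ_lt hk⟩ : Fin (m + 1)) = ⟨k, by omega⟩ := by
    apply Fin.ext; rw [skip_val]; simp only; rw [if_pos (by omega)]
  rw [e2] at h1'
  -- σ at position k has value m, at position k+1 = j it has value m+1: forbidden
  have hlast : (σ (⟨k + 1, by omega⟩ : Fin (m + 2))).val = m + 1 := by
    have e3 : (⟨k + 1, by omega⟩ : Fin (m + 2)) = ⟨j, by omega⟩ := Fin.ext (by simp [hkJ])
    rw [e3]
    exact congrArg Fin.val (sigma_at_j σ (by omega))
  exact hA k (by omega) (hlast.trans (congrArg (· + 1) h1'.symm))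

/-- Insertion produces a word containing the `n1` pattern. -/
lemma contains_ins (τ : Equiv.Perm (Fin (m + 1))) : containsN1 (m + 2) (insPerm τ) := by
  set j : ℕ := (τ.symm 0).val with hJ
  have hjl : j < m + 1 := (τ.symm 0).isLt
  refine ⟨j, by omega, ?_, ?_⟩
  · rw [insPerm_apply, insFun_of_eq τ _ rfl]
    rfl
  · rw [insPerm_apply, insFun_of_gt τ _ (by simp; exact hJ.ge)]
    rw [Fin.coe_castSucc]
    have e : (⟨(⟨j + 1, by omega⟩ : Fin (m + 2)).val - 1, by omega⟩ : Fin (m + 1))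
        = τ.symm 0 := by
      apply Fin.ext; simp; exact hJ
    rw [e, Equiv.apply_symm_apply]
    rfl

/-- Insertion preserves avoidance of successor patterns (given `n1`-avoidance). -/
lemma avoids_ins (τ : Equiv.Perm (Fin (m + 1))) (hA : avoidsSucc (m + 1) τ)
    (hB : ¬ containsN1 (m + 1) τ) : avoidsSucc (m + 2) (insPerm τ) := by
  intro k hk hcon
  set j : ℕ := (τ.symm 0).val with hJ
  have hjl : j < m + 1 := (τ.symm 0).isLt
  rw [insPerm_apply, insPerm_apply] at hcon
  rcases lt_trichotomy (k + 1) j with hc | hc | hc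
  · have ha1 : (⟨k + 1, hk⟩ : Fin (m + 2)).val < (τ.symm 0).val := hc
    have ha2 : (⟨k, Nat.lt_of_succ_lt hk⟩ : Fin (m + 2)).val < (τ.symm 0).val :=
      Nat.lt_of_succ_lt hc
    rw [insFun_of_lt τ _ ha1, insFun_of_lt τ _ ha2,
        Fin.coe_castSucc, Fin.coe_castSucc] at hcon
    exact hA k (by omega) hcon
  · have ha1 : (⟨k + 1, hk⟩ : Fin (m + 2)).val = (τ.symm 0).val := hc
    have ha2 : (⟨k, Nat.lt_of_succ_lt hk⟩ : Fin (m + 2)).val < (τ.symm 0).val :=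
      lt_of_lt_of_eq (Nat.lt_succ_self k) hc
    rw [insFun_of_eq τ _ ha1, insFun_of_lt τ _ ha2, Fin.coe_castSucc] at hcon
    have hm : (τ (⟨k, by omega⟩ : Fin (m + 1))).val = m := by
      have h5 : (Fin.last (m + 1)).val = (τ ⟨k, by omega⟩).val + 1 := hcon
      have h6 := (τ (⟨k, by omega⟩ : Fin (m + 1))).isLt
      simp only [Fin.val_last] at h5
      omega
    apply hB
    refine ⟨k, by omega, hm, ?_⟩
    have e : (⟨k + 1, by omega⟩ : Fin (m + 1)) = τ.symm 0 := by
      apply Fin.ext; simp [hc]; exact hJ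
    rw [e, Equiv.apply_symm_apply]
    rfl
  · by_cases hkj : k = j
    · have ha1 : (⟨k, Nat.lt_of_succ_lt hk⟩ : Fin (m + 2)).val = (τ.symm 0).val := hkj
      have ha2 : (τ.symm 0).val < (⟨k + 1, hk⟩ : Fin (m + 2)).val :=
        lt_of_eq_of_lt hkj.symm (Nat.lt_succ_self k)
      rw [insFun_of_eq τ _ ha1, insFun_of_gt τ _ ha2, Fin.coe_castSucc] at hcon
      have e : (⟨(⟨k + 1, hk⟩ : Fin (m + 2)).val - 1, by have := hk; omega⟩ : Fin (m + 1))
          = τ.symm 0 := by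
        apply Fin.ext; simp [hkj]; exact hJ
      rw [e, Equiv.apply_symm_apply] at hcon
      have h5 : (0 : Fin (m + 1)).val = (Fin.last (m + 1)).val + 1 := hcon
      simp at h5
    · have hjk : j < k := by omega
      have ha1 : (τ.symm 0).val < (⟨k + 1, hk⟩ : Fin (m + 2)).val := by
        show j < k + 1; omega
      have ha2 : (τ.symm 0).val < (⟨k, Nat.lt_of_succ_lt hk⟩ : Fin (m + 2)).val := hjk
      rw [insFun_of_gt τ _ ha1, insFun_of_gt τ _ ha2,
          Fin.coe_castSucc, Fin.coe_castSucc] at hcon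
      have e1 : (⟨(⟨k + 1, hk⟩ : Fin (m + 2)).val - 1, by have := hk; omega⟩ : Fin (m + 1))
          = ⟨k - 1 + 1, by omega⟩ := by
        apply Fin.ext; simp; omega
      have e2 : (⟨(⟨k, Nat.lt_of_succ_lt hk⟩ : Fin (m + 2)).val - 1,
            by have := hk; omega⟩ : Fin (m + 1))
          = ⟨k - 1, by omega⟩ := by
        apply Fin.ext; simp
      rw [e1, e2] at hcon
      exact hA (k - 1) (by omega) hcon

/-- Deleting after inserting recovers the original word. -/
lemma del_ins (τ : Equiv.Perm (Fin (m + 1))) : delPerm (insPerm τ) = τ := by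
  set j : ℕ := (τ.symm 0).val with hJ
  have hjl : j < m + 1 := (τ.symm 0).isLt
  have hsym : (insPerm τ).symm (Fin.last (m + 1)) = ⟨j, by omega⟩ := by
    rw [Equiv.symm_apply_eq]
    exact (insFun_of_eq τ ⟨j, by omega⟩ rfl).symm
  apply Equiv.ext
  intro p
  apply Fin.ext
  rw [delPerm_apply, delFun_val, hsym]
  by_cases hp : p.val < j
  · have e : skip (⟨j, by omega⟩ : Fin (m + 2)).val p = ⟨p.val, by omega⟩ := by
      apply Fin.ext; rw [skip_val]; simp [hp]
    rw [e, insPerm_apply, insFun_of_lt τ _ (show (⟨p.val, by omega⟩ : Fin (m + 2)).val < j from hp),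
      Fin.coe_castSucc]
  · have e : skip (⟨j, by omega⟩ : Fin (m + 2)).val p = ⟨p.val + 1, by omega⟩ := by
      apply Fin.ext; rw [skip_val]; simp [hp]
    rw [e, insPerm_apply, insFun_of_gt τ _ (show j < (⟨p.val + 1, by omega⟩ : Fin (m + 2)).val by
        simp; omega), Fin.coe_castSucc]
    congr 1

/-- Inserting after deleting recovers the original word. -/
lemma ins_del (σ : Equiv.Perm (Fin (m + 2))) (hB : containsN1 (m + 2) σ) :
    insPerm (delPerm σ) = σ := by
  obtain ⟨hj1, hj2⟩ := pattern_pos σ hB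
  set j : ℕ := (σ.symm (Fin.last (m + 1))).val with hJ
  set τ : Equiv.Perm (Fin (m + 1)) := delPerm σ with hT
  have ht : τ.symm 0 = ⟨j, by omega⟩ := by
    rw [Equiv.symm_apply_eq]
    apply Fin.ext
    rw [delPerm_apply, delFun_val]
    have e : skip j (⟨j, by omega⟩ : Fin (m + 1)) = ⟨j + 1, hj1⟩ := by
      apply Fin.ext; rw [skip_val]; simp
    rw [e, hj2]
    rfl
  have htv : (τ.symm 0).val = j := by rw [ht]
  apply Equiv.ext
  intro i
  rw [insPerm_apply]
  rcases lt_trichotomy i.val j with hc | hc | hc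
  · rw [insFun_of_lt τ i (by rw [htv]; exact hc)]
    apply Fin.ext
    rw [Fin.coe_castSucc, delPerm_apply, delFun_val]
    have e : skip j (⟨i.val, by omega⟩ : Fin (m + 1)) = i := by
      apply Fin.ext; rw [skip_val]; simp [hc]
    rw [e]
  · rw [insFun_of_eq τ i (by rw [htv]; exact hc)]
    have e : i = (⟨j, by omega⟩ : Fin (m + 2)) := Fin.ext hc
    rw [e, sigma_at_j σ (by omega)]
  · rw [insFun_of_gt τ i (by rw [htv]; exact hc)]
    apply Fin.ext
    rw [Fin.coe_castSucc, delPerm_apply, delFun_val]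
    have e : skip j (⟨i.val - 1, by have := i.isLt; omega⟩ : Fin (m + 1)) = i := by
      apply Fin.ext; rw [skip_val]; simp only
      rw [if_neg (by omega)]
      omega
    rw [e]

/-- The bijection between pattern-containing arrangements of size `m+2`
and good arrangements of size `m+1`. -/
noncomputable def theEquiv (m : ℕ) :
    {σ : Equiv.Perm (Fin (m + 2)) // avoidsSucc (m + 2) σ ∧ containsN1 (m + 2) σ} ≃
    {τ : Equiv.Perm (Fin (m + 1)) // avoidsSucc (m + 1) τ ∧ ¬ containsN1 (m + 1) τ} where
  toFun s := ⟨delPerm s.1, avoids_del s.1 s.2.1 s.2.2, notN1_del s.1 s.2.1 s.2.2⟩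
  invFun t := ⟨insPerm t.1, avoids_ins t.1 t.2.1 t.2.2, contains_ins t.1⟩
  left_inv s := Subtype.ext (ins_del s.1 s.2.2)
  right_inv t := Subtype.ext (del_ins t.1)

end AuxD2

theorem stmt_0 (n : ℕ) (hn : 2 ≤ n) :
    dCount n = DCount (n - 1) + DCount n := by
  obtain ⟨m, rfl⟩ : ∃ m, n = m + 2 := ⟨n - 2, by omega⟩
  show dCount (m + 2) = DCount (m + 1) + DCount (m + 2)
  rw [dCount, DCount, DCount,
    AuxD2.card_split (avoidsSucc (m + 2)) (containsN1 (m + 2))]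
  congr 1
  exact Nat.card_congr (AuxD2.theEquiv m)
end

section
/- For every integer n ≥ 2, the number of arrangements of {1,…,n} that avoid all patterns 12, 23, …, (n−1)n but contain the pattern n1 equals D_{n−1}. -/
namespace ArrAux

/-- congruence for applications at `Fin.mk` -/
lemma app_congr {N : ℕ} (σ : Equiv.Perm (Fin N)) {j j' : ℕ} (hj : j < N) (hj' : j' < N)
    (e : j = j') : (σ ⟨j, hj⟩).val = (σ ⟨j', hj'⟩).val := by subst e; rfl

variable {m : ℕ}

/-- position of the value `m+1` (digit `n`) in the word of `σ`. -/
def kk (σ : Equiv.Perm (Fin (m + 2))) : ℕ := (σ.symm (Fin.last (m + 1))).val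

lemma kk_lt (σ : Equiv.Perm (Fin (m + 2))) : kk σ < m + 2 := (σ.symm (Fin.last (m + 1))).isLt

lemma apply_kk (σ : Equiv.Perm (Fin (m + 2))) {j : ℕ} (hj : j < m + 2) (e : j = kk σ) :
    (σ ⟨j, hj⟩).val = m + 1 := by
  subst e
  have : (⟨kk σ, hj⟩ : Fin (m + 2)) = σ.symm (Fin.last (m + 1)) := rfl
  rw [this, Equiv.apply_symm_apply]
  rfl

lemma val_lt_of_ne (σ : Equiv.Perm (Fin (m + 2))) (p : Fin (m + 2)) (hp : p.val ≠ kk σ) :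
    (σ p).val < m + 1 := by
  have h1 : σ p ≠ Fin.last (m + 1) := by
    intro h
    apply hp
    have : p = σ.symm (Fin.last (m + 1)) := by rw [← h, Equiv.symm_apply_apply]
    rw [this]; rfl
  have h2 : (σ p).val ≠ m + 1 := fun h => h1 (Fin.ext h)
  have := (σ p).isLt
  omega

/-- the word of `σ` with value `m+1` deleted. -/
def delFun (σ : Equiv.Perm (Fin (m + 2))) (j : Fin (m + 1)) : Fin (m + 1) :=
  if h : j.val < kk σ then
    ⟨(σ ⟨j.val, Nat.lt_succ_of_lt j.isLt⟩).val,
      val_lt_of_ne σ _ (show j.val ≠ kk σ by omega)⟩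
  else
    ⟨(σ ⟨j.val + 1, Nat.succ_lt_succ j.isLt⟩).val,
      val_lt_of_ne σ _ (show j.val + 1 ≠ kk σ by omega)⟩

lemma delFun_inj (σ : Equiv.Perm (Fin (m + 2))) : Function.Injective (delFun (m := m) σ) := by
  intro j1 j2 h
  have hv := congrArg Fin.val h
  unfold delFun at hv
  apply Fin.ext
  split_ifs at hv with h1 h2 h2 <;>
  · have := congrArg Fin.val (σ.injective (Fin.ext hv))
    simp only [Fin.val_mk] at this
    omega

/-- the permutation of `Fin (m+1)` obtained by deleting the value `m+1`. -/
noncomputable def delPerm (σ : Equiv.Perm (Fin (m + 2))) : Equiv.Perm (Fin (m + 1)) :=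
  Equiv.ofBijective _ (Finite.injective_iff_bijective.mp (delFun_inj σ))

lemma delPerm_val (σ : Equiv.Perm (Fin (m + 2))) (j : ℕ) (hj : j < m + 1) :
    ((delPerm σ) ⟨j, hj⟩).val =
      if j < kk σ then (σ ⟨j, Nat.lt_succ_of_lt hj⟩).val
      else (σ ⟨j + 1, Nat.succ_lt_succ hj⟩).val := by
  show (delFun σ ⟨j, hj⟩).val = _
  unfold delFun
  split_ifs <;> rfl

/-- position of the value `0` (digit `1`) in the word of `τ`. -/
def tt (τ : Equiv.Perm (Fin (m + 1))) : ℕ := (τ.symm 0).val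

lemma tt_lt (τ : Equiv.Perm (Fin (m + 1))) : tt τ < m + 1 := (τ.symm 0).isLt

lemma apply_tt (τ : Equiv.Perm (Fin (m + 1))) {j : ℕ} (hj : j < m + 1) (e : j = tt τ) :
    (τ ⟨j, hj⟩).val = 0 := by
  subst e
  have : (⟨tt τ, hj⟩ : Fin (m + 1)) = τ.symm 0 := rfl
  rw [this, Equiv.apply_symm_apply]
  simp

/-- the word of `τ` with value `m+1` inserted right before the value `0`. -/
def insFun (τ : Equiv.Perm (Fin (m + 1))) (j : Fin (m + 2)) : Fin (m + 2) :=
  if h : j.val < tt τ then (τ ⟨j.val, h.trans (tt_lt τ)⟩).castSucc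
  else if h2 : j.val = tt τ then Fin.last (m + 1)
  else (τ ⟨j.val - 1, by have := j.isLt; omega⟩).castSucc

lemma insFun_inj (τ : Equiv.Perm (Fin (m + 1))) : Function.Injective (insFun (m := m) τ) := by
  intro j1 j2 h
  have hv := congrArg Fin.val h
  unfold insFun at hv
  apply Fin.ext
  have hl1 := j1.isLt
  have hl2 := j2.isLt
  split_ifs at hv with h1 h2 h3 h4 h5 h6 h7 <;>
    simp only [Fin.coe_castSucc, Fin.val_last, Fin.val_mk] at hv <;>
    first
      | omega
      | (exfalso
         first
           | (have := (τ ⟨j1.val, by omega⟩).isLt; omega)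
           | (have := (τ ⟨j1.val - 1, by omega⟩).isLt; omega)
           | (have := (τ ⟨j2.val, by omega⟩).isLt; omega)
           | (have := (τ ⟨j2.val - 1, by omega⟩).isLt; omega))
      | (have := congrArg Fin.val (τ.injective (Fin.ext hv))
         simp only [Fin.val_mk] at this
         omega)

/-- the permutation of `Fin (m+2)` obtained by inserting the value `m+1` before `0`. -/
noncomputable def insPerm (τ : Equiv.Perm (Fin (m + 1))) : Equiv.Perm (Fin (m + 2)) :=
  Equiv.ofBijective _ (Finite.injective_iff_bijective.mp (insFun_inj τ))

lemma insPerm_val_lt (τ : Equiv.Perm (Fin (m + 1))) {j : ℕ} (hj : j < m + 2)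
    (hj' : j < m + 1) (h : j < tt τ) :
    ((insPerm τ) ⟨j, hj⟩).val = (τ ⟨j, hj'⟩).val := by
  show (insFun τ ⟨j, hj⟩).val = _
  unfold insFun
  rw [dif_pos h]
  rfl

lemma insPerm_val_eq (τ : Equiv.Perm (Fin (m + 1))) {j : ℕ} (hj : j < m + 2) (h : j = tt τ) :
    ((insPerm τ) ⟨j, hj⟩).val = m + 1 := by
  show (insFun τ ⟨j, hj⟩).val = _
  unfold insFun
  rw [dif_neg (show ¬ j < tt τ by omega), dif_pos h]
  rfl

lemma insPerm_val_gt (τ : Equiv.Perm (Fin (m + 1))) {j : ℕ} (hj : j < m + 2)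
    (hj' : j - 1 < m + 1) (h : tt τ < j) :
    ((insPerm τ) ⟨j, hj⟩).val = (τ ⟨j - 1, hj'⟩).val := by
  show (insFun τ ⟨j, hj⟩).val = _
  unfold insFun
  rw [dif_neg (show ¬ j < tt τ by omega), dif_neg (show ¬ j = tt τ by omega)]
  rfl

lemma contains_spec (σ : Equiv.Perm (Fin (m + 2))) (h : containsN1 (m + 2) σ) :
    ∃ hk : kk σ + 1 < m + 2, (σ ⟨kk σ + 1, hk⟩).val = 0 := by
  obtain ⟨a, ha, h1, h2⟩ := h
  have hak : a = kk σ := by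
    have e : σ ⟨a, Nat.lt_of_succ_lt ha⟩ = Fin.last (m + 1) := Fin.ext (by
      simpa using h1)
    have : (⟨a, Nat.lt_of_succ_lt ha⟩ : Fin (m + 2)) = σ.symm (Fin.last (m + 1)) := by
      rw [← e, Equiv.symm_apply_apply]
    have := congrArg Fin.val this
    simpa [kk] using this
  subst hak
  exact ⟨ha, h2⟩

lemma avoids_gen {N : ℕ} (σ : Equiv.Perm (Fin N)) (hA : avoidsSucc N σ) :
    ∀ (j j' : ℕ) (hj : j < N) (hj' : j' < N), j' = j + 1 →
      (σ ⟨j', hj'⟩).val ≠ (σ ⟨j, hj⟩).val + 1 := by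
  intro j j' hj hj' e
  subst e
  exact hA j hj'

section DelProps

variable (σ : Equiv.Perm (Fin (m + 2))) (hA : avoidsSucc (m + 2) σ) (hC : containsN1 (m + 2) σ)

include hA hC

lemma del_avoids : avoidsSucc (m + 1) (delPerm σ) := by
  obtain ⟨hk, h0⟩ := contains_spec σ hC
  intro a ha
  rw [delPerm_val, delPerm_val]
  by_cases h1 : a + 1 < kk σ
  · rw [if_pos h1, if_pos (by omega)]
    exact avoids_gen σ hA a (a + 1) _ _ rfl
  · rw [if_neg h1]
    by_cases h2 : a + 1 = kk σ
    · rw [if_pos (by omega)]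
      have hz : (σ ⟨a + 1 + 1, Nat.succ_lt_succ ha⟩).val = 0 := by
        have := app_congr σ (Nat.succ_lt_succ ha) hk (show a + 1 + 1 = kk σ + 1 by omega)
        rw [this, h0]
      omega
    · rw [if_neg (by omega)]
      exact avoids_gen σ hA (a + 1) (a + 1 + 1) _ _ rfl

lemma del_not_contains : ¬ containsN1 (m + 1) (delPerm σ) := by
  obtain ⟨hk, h0⟩ := contains_spec σ hC
  rintro ⟨a, ha, hm, hz⟩
  rw [delPerm_val] at hm hz
  have uniq0 : ∀ (j : ℕ) (hj : j < m + 2), (σ ⟨j, hj⟩).val = 0 → j = kk σ + 1 := by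
    intro j hj h
    have := σ.injective (a₁ := ⟨j, hj⟩) (a₂ := ⟨kk σ + 1, hk⟩) (Fin.ext (by rw [h, h0]))
    exact congrArg Fin.val this
  by_cases h1 : a + 1 < kk σ
  · rw [if_pos h1] at hz
    have := uniq0 (a + 1) _ hz
    omega
  · rw [if_neg h1] at hz
    have he : a + 1 + 1 = kk σ + 1 := uniq0 (a + 1 + 1) _ hz
    have hak : a < kk σ := by omega
    rw [if_pos hak] at hm
    have p0 : a < m + 2 := by omega
    have p1 : a + 1 < m + 2 := by omega
    have hlast : (σ ⟨a + 1, p1⟩).val = m + 1 := apply_kk σ p1 (by omega)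
    have hne := avoids_gen σ hA a (a + 1) p0 p1 rfl
    have hm' : (σ ⟨a, p0⟩).val = m := hm.trans (by omega)
    omega

end DelProps

section InsProps

variable (τ : Equiv.Perm (Fin (m + 1))) (hA : avoidsSucc (m + 1) τ) (hN : ¬ containsN1 (m + 1) τ)

lemma ins_contains : containsN1 (m + 2) (insPerm τ) := by
  have hb : tt τ + 1 < m + 2 := by have := tt_lt τ; omega
  refine ⟨tt τ, hb, ?_, ?_⟩
  · rw [insPerm_val_eq τ (Nat.lt_of_succ_lt hb) rfl]; omega
  · have q : tt τ + 1 - 1 < m + 1 := tt_lt τ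
    rw [insPerm_val_gt τ hb q (Nat.lt_succ_self _)]
    exact apply_tt τ q rfl

include hA hN in
lemma ins_avoids : avoidsSucc (m + 2) (insPerm τ) := by
  intro a ha
  rcases lt_trichotomy (a + 1) (tt τ) with h1 | h1 | h1
  · have q1 : a + 1 < m + 1 := h1.trans (tt_lt τ)
    have q0 : a < m + 1 := by omega
    rw [insPerm_val_lt τ ha q1 h1, insPerm_val_lt τ _ q0 (by omega)]
    exact avoids_gen τ hA a (a + 1) q0 q1 rfl
  · have hb : a + 1 < m + 1 := by have := tt_lt τ; omega
    rw [insPerm_val_eq τ ha h1, insPerm_val_lt τ _ (Nat.lt_of_succ_lt hb) (by omega)]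
    intro hcon
    apply hN
    refine ⟨a, hb, by omega, apply_tt τ hb h1⟩
  · rcases Nat.lt_or_ge (tt τ) a with h2 | h2
    · have q1 : a + 1 - 1 < m + 1 := by omega
      have q0 : a - 1 < m + 1 := by omega
      rw [insPerm_val_gt τ ha q1 h1, insPerm_val_gt τ _ q0 h2]
      exact avoids_gen τ hA (a - 1) (a + 1 - 1) q0 q1 (by omega)
    · have h2' : a = tt τ := by omega
      have q : a + 1 - 1 < m + 1 := by have := tt_lt τ; omega
      rw [insPerm_val_gt τ ha q h1, insPerm_val_eq τ _ h2']
      have hz : (τ ⟨a + 1 - 1, q⟩).val = 0 := apply_tt τ q (by omega)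
      omega

end InsProps

lemma ins_del (σ : Equiv.Perm (Fin (m + 2))) (hC : containsN1 (m + 2) σ) :
    insPerm (delPerm σ) = σ := by
  obtain ⟨hk, h0⟩ := contains_spec σ hC
  have hdel0 : (delPerm σ) ⟨kk σ, by omega⟩ = 0 := by
    apply Fin.ext
    rw [delPerm_val, if_neg (lt_irrefl _)]
    exact h0
  have htt : tt (delPerm σ) = kk σ := by
    unfold tt
    rw [← hdel0, Equiv.symm_apply_apply]
  apply Equiv.ext
  rintro ⟨jv, hj⟩
  apply Fin.ext
  rcases lt_trichotomy jv (kk σ) with h | h | h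
  · rw [insPerm_val_lt _ _ (by omega) (by omega), delPerm_val, if_pos h]
  · rw [insPerm_val_eq _ _ (by omega)]
    exact (apply_kk σ hj h).symm
  · rw [insPerm_val_gt _ _ (by omega) (by omega), delPerm_val, if_neg (by omega)]
    exact app_congr σ _ _ (by omega)

lemma del_ins (τ : Equiv.Perm (Fin (m + 1))) : delPerm (insPerm τ) = τ := by
  have hinsL : insPerm τ ⟨tt τ, by have := tt_lt τ; omega⟩ = Fin.last (m + 1) :=
    Fin.ext (by rw [insPerm_val_eq τ _ rfl]; rfl)
  have hkk : kk (insPerm τ) = tt τ := by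
    unfold kk
    rw [← hinsL, Equiv.symm_apply_apply]
  apply Equiv.ext
  rintro ⟨jv, hj⟩
  apply Fin.ext
  rw [delPerm_val]
  by_cases h : jv < kk (insPerm τ)
  · rw [if_pos h, insPerm_val_lt τ _ (by omega) (by omega)]
  · rw [if_neg h, insPerm_val_gt τ _ (by omega) (by omega)]
    exact app_congr τ _ _ (by omega)

end ArrAux

theorem stmt_1 (n : ℕ) (hn : 2 ≤ n) :
    Nat.card {σ : Equiv.Perm (Fin n) // avoidsSucc n σ ∧ containsN1 n σ} =
      DCount (n - 1) := by
  obtain ⟨m, rfl⟩ : ∃ m, n = m + 2 := ⟨n - 2, by omega⟩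
  rw [show m + 2 - 1 = m + 1 from rfl]
  unfold DCount
  apply Nat.card_congr
  exact
    { toFun := fun x => ⟨ArrAux.delPerm x.1,
        ArrAux.del_avoids x.1 x.2.1 x.2.2, ArrAux.del_not_contains x.1 x.2.1 x.2.2⟩
      invFun := fun y => ⟨ArrAux.insPerm y.1,
        ArrAux.ins_avoids y.1 y.2.1 y.2.2, ArrAux.ins_contains y.1⟩
      left_inv := fun x => Subtype.ext (ArrAux.ins_del x.1 x.2.2)
      right_inv := fun y => Subtype.ext (ArrAux.del_ins y.1) }
end

section
/- For every integer n ≥ 1, D_n = Der_n + (−1)^{n−1}, as an identity in the integers. -/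
open Finset Equiv

namespace Stmt4Aux

/-- cyclic rotation on `Fin n`. -/
def rot (n : ℕ) (i : Fin n) : Fin n :=
  if h : i.val + 1 < n then ⟨i.val + 1, h⟩ else ⟨0, i.pos⟩

lemma rot_val_cases {n : ℕ} (i : Fin n) :
    ((rot n i).val = i.val + 1 ∧ i.val + 1 < n) ∨ ((rot n i).val = 0 ∧ i.val + 1 = n) := by
  have := i.isLt
  unfold rot
  split
  · exact Or.inl ⟨rfl, ‹_›⟩
  · exact Or.inr ⟨rfl, by omega⟩

lemma rot_inj {n : ℕ} {i j : Fin n} (h : rot n i = rot n j) : i = j := by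
  have h' := congrArg Fin.val h
  have hi := i.isLt; have hj := j.isLt
  rcases rot_val_cases i with ⟨h1, h2⟩ | ⟨h1, h2⟩ <;>
    rcases rot_val_cases j with ⟨h3, h4⟩ | ⟨h3, h4⟩ <;>
      exact Fin.ext (by omega)

/-- the pattern predicate, on inverse permutations: the value `rot i` sits
immediately after the value `i`. -/
def QQ (n : ℕ) (i : Fin n) (τ : Perm (Fin n)) : Prop :=
  (τ (rot n i)).val = (τ i).val + 1

instance (n : ℕ) (i : Fin n) (τ : Perm (Fin n)) : Decidable (QQ n i τ) := by
  unfold QQ; infer_instance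

def PP (n : ℕ) (S : Finset (Fin n)) (τ : Perm (Fin n)) : Prop :=
  ∀ i ∈ S, QQ n i τ

lemma pp_univ_empty {n : ℕ} (hn : 1 ≤ n) (τ : Perm (Fin n)) : ¬ PP n univ τ := by
  intro h
  have h1 : n - 1 < n := by omega
  have h2 := h (τ.symm ⟨n - 1, h1⟩) (mem_univ _)
  unfold QQ at h2
  rw [Equiv.apply_symm_apply] at h2
  have := (τ (rot n (τ.symm ⟨n - 1, h1⟩))).isLt
  simp at h2
  omega

/- deletion of a point in `Fin (m+2)` -/

def del {m : ℕ} (P : Fin (m + 2)) (x : Fin (m + 2)) : Fin (m + 1) :=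
  ⟨if x.val < P.val then x.val else x.val - 1, by
    have := x.isLt; have := P.isLt; split <;> omega⟩

lemma sa_val {m : ℕ} (P : Fin (m + 2)) (j : Fin (m + 1)) :
    (P.succAbove j).val = if j.val < P.val then j.val else j.val + 1 := by
  rw [Fin.succAbove]
  split
  · simp only [Fin.coe_castSucc]
    rw [if_pos]
    exact ‹_›
  · simp only [Fin.val_succ]
    rw [if_neg]
    intro hc
    exact ‹¬ _› (by simpa [Fin.lt_def] using hc)

lemma sa_del {m : ℕ} (P : Fin (m + 2)) (x : Fin (m + 2)) (hx : x ≠ P) :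
    P.succAbove (del P x) = x := by
  have hxv : x.val ≠ P.val := fun h => hx (Fin.ext h)
  have := x.isLt; have := P.isLt
  apply Fin.ext
  rw [sa_val]
  simp only [del]
  split_ifs <;> omega

lemma del_sa {m : ℕ} (P : Fin (m + 2)) (j : Fin (m + 1)) :
    del P (P.succAbove j) = j := by
  have h := sa_val P j
  have hne : (P.succAbove j).val ≠ P.val :=
    fun hv => Fin.succAbove_ne P j (Fin.ext hv)
  apply Fin.ext
  simp only [del]
  rw [h] at hne ⊢
  have := j.isLt; have := P.isLt
  split_ifs at hne ⊢ <;> omega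

lemma card_pp : ∀ (k : ℕ) {n : ℕ} (S : Finset (Fin n)), S.card = k → S ≠ univ →
    Nat.card {τ : Perm (Fin n) // PP n S τ} = (n - k).factorial := by
  intro k
  induction k with
  | zero =>
    intro n S hS hSu
    have hSe : S = ∅ := card_eq_zero.mp hS
    subst hSe
    have e : {τ : Perm (Fin n) // PP n ∅ τ} ≃ Perm (Fin n) :=
      Equiv.subtypeUnivEquiv (fun τ i hi => absurd hi (notMem_empty i))
    rw [Nat.card_congr e, Nat.card_eq_fintype_card, Fintype.card_perm, Fintype.card_fin,
      Nat.sub_zero]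
  | succ k IH =>
    intro n S hS hSu
    -- find a chain end
    obtain ⟨i, hiS, hpS⟩ : ∃ i ∈ S, rot n i ∉ S := by
      by_contra hc
      push_neg at hc
      obtain ⟨i₀, hi₀⟩ : S.Nonempty := card_pos.mp (by omega)
      have horb : ∀ j : ℕ, (⟨(i₀.val + j) % n, Nat.mod_lt _ i₀.pos⟩ : Fin n) ∈ S := by
        intro j
        induction j with
        | zero =>
          have : (⟨(i₀.val + 0) % n, Nat.mod_lt _ i₀.pos⟩ : Fin n) = i₀ :=
            Fin.ext (by simp [Nat.mod_eq_of_lt i₀.isLt])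
          rwa [this]
        | succ j ih =>
          have hmem := hc _ ih
          have key : rot n (⟨(i₀.val + j) % n, Nat.mod_lt _ i₀.pos⟩ : Fin n)
              = ⟨(i₀.val + (j + 1)) % n, Nat.mod_lt _ i₀.pos⟩ := by
            apply Fin.ext
            rcases rot_val_cases (⟨(i₀.val + j) % n, Nat.mod_lt _ i₀.pos⟩ : Fin n) with
              ⟨h1, h2⟩ | ⟨h1, h2⟩
            · rw [h1]
              simp only at h2 ⊢
              rw [← Nat.add_assoc]
              conv_rhs => rw [← Nat.mod_add_mod]
              rw [Nat.mod_eq_of_lt h2]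
            · rw [h1]
              simp only at h2 ⊢
              rw [← Nat.add_assoc]
              conv_rhs => rw [← Nat.mod_add_mod]
              rw [h2, Nat.mod_self]
          rwa [key] at hmem
      apply hSu
      apply eq_univ_iff_forall.mpr
      intro x
      have h := horb (n + x.val - i₀.val)
      have hx : (⟨(i₀.val + (n + x.val - i₀.val)) % n, Nat.mod_lt _ i₀.pos⟩ : Fin n) = x := by
        apply Fin.ext
        simp only
        have hi := i₀.isLt
        have : i₀.val + (n + x.val - i₀.val) = n + x.val := by omega
        rw [this, Nat.add_mod_left, Nat.mod_eq_of_lt x.isLt]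
      rwa [hx] at h
    -- dispatch tiny n
    rcases n with _ | n'
    · exact i.elim0
    rcases n' with _ | m
    · exact absurd (eq_univ_iff_forall.mpr fun x =>
        (show x = i from Fin.ext (by omega)) ▸ hiS) hSu
    -- now n = m + 2
    set p := rot (m + 2) i with hp
    have hip : i ≠ p := fun h => hpS (h ▸ hiS)
    set S' : Finset (Fin (m + 1)) := (S.erase i).image (del p) with hS'def
    have hnep : ∀ x ∈ S.erase i, x ≠ p := fun x hx h => hpS (h ▸ mem_of_mem_erase hx)
    have hmemS' : ∀ j : Fin (m + 1), j ∈ S' ↔ p.succAbove j ∈ S.erase i := by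
      intro j
      constructor
      · intro hj
        obtain ⟨x, hx, rfl⟩ := mem_image.mp hj
        rwa [sa_del p x (hnep x hx)]
      · intro hj
        exact mem_image.mpr ⟨_, hj, del_sa p j⟩
    have hinj : Set.InjOn (del p) (S.erase i : Finset (Fin (m + 2))) := by
      intro x hx y hy hxy
      rw [← sa_del p x (hnep x (Finset.mem_coe.mp hx)), hxy,
        sa_del p y (hnep y (Finset.mem_coe.mp hy))]
    have hS'card : S'.card = k := by
      rw [hS'def, card_image_of_injOn hinj, card_erase_of_mem hiS, hS]
      omega
    have hS'univ : S' ≠ univ := by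
      intro h
      have h1 : S'.card = m + 1 := by rw [h, card_univ, Fintype.card_fin]
      have h2 := (Finset.card_lt_iff_ne_univ S).mpr hSu
      rw [Fintype.card_fin] at h2
      omega
    -- rot commutes with deletion away from i and p
    have rot_comm : ∀ x : Fin (m + 2), x ∈ S.erase i →
        del p (rot (m + 2) x) = rot (m + 1) (del p x) := by
      intro x hx
      have hxi : x ≠ i := ne_of_mem_erase hx
      have hxiv : x.val ≠ i.val := fun h => hxi (Fin.ext h)
      have hxp : x.val ≠ p.val := fun h => (hnep x hx) (Fin.ext h)
      have hrxp : (rot (m + 2) x).val ≠ p.val :=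
        fun h => hxi (rot_inj (hp ▸ Fin.ext h))
      have e1 : (del p (rot (m + 2) x)).val
          = if (rot (m + 2) x).val < p.val then (rot (m + 2) x).val
            else (rot (m + 2) x).val - 1 := rfl
      have e2 : (del p x).val = if x.val < p.val then x.val else x.val - 1 := rfl
      have hxlt := x.isLt
      have hilt := i.isLt
      rcases rot_val_cases x with ⟨h1, h2⟩ | ⟨h1, h2⟩ <;>
        rcases rot_val_cases (del p x) with ⟨h3, h4⟩ | ⟨h3, h4⟩ <;>
          rcases hp ▸ rot_val_cases i with ⟨h5, h6⟩ | ⟨h5, h6⟩ <;>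
            rw [Fin.ext_iff, e1, h3] <;> split_ifs at e2 ⊢ <;> omega

    -- insertion map
    set Ins : Perm (Fin (m + 1)) → Perm (Fin (m + 2)) := fun τ' =>
      (finSuccEquiv' p).trans ((Equiv.optionCongr τ').trans
        (finSuccEquiv' ((τ' (del p i)).succ)).symm) with hIns
    have Ins_p : ∀ τ', Ins τ' p = (τ' (del p i)).succ := by
      intro τ'
      simp [hIns, Equiv.trans_apply]
    have Ins_sa : ∀ (τ' : Perm (Fin (m + 1))) (x : Fin (m + 1)),
        Ins τ' (p.succAbove x) = ((τ' (del p i)).succ).succAbove (τ' x) := by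
      intro τ' x
      simp [hIns, Equiv.trans_apply]
    have qq_iff : ∀ (τ' : Perm (Fin (m + 1))) (j : Fin (m + 2)), j ∈ S.erase i →
        (QQ (m + 2) j (Ins τ') ↔ QQ (m + 1) (del p j) τ') := by
      intro τ' j hj
      have hji : j ≠ i := ne_of_mem_erase hj
      have hjp : j ≠ p := hnep j hj
      have hrot : rot (m + 2) j ≠ p := fun h => hji (rot_inj (h.trans hp))
      have e1 : (Ins τ') j = ((τ' (del p i)).succ).succAbove (τ' (del p j)) := by
        conv_lhs => rw [← sa_del p j hjp]
        rw [Ins_sa]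
      have e2 : (Ins τ') (rot (m + 2) j)
          = ((τ' (del p i)).succ).succAbove (τ' (rot (m + 1) (del p j))) := by
        conv_lhs => rw [← sa_del p (rot (m + 2) j) hrot, rot_comm j hj]
        rw [Ins_sa]
      unfold QQ
      rw [e1, e2]
      have hdd : del p j ≠ del p i := fun h => hji (by
        rw [← sa_del p j hjp, h, sa_del p i hip])
      have haa : (τ' (del p j)).val ≠ (τ' (del p i)).val :=
        fun h => hdd (τ'.injective (Fin.ext h))
      rw [sa_val, sa_val, Fin.val_succ]
      have h1 := (τ' (del p j)).isLt
      have h2 := (τ' (rot (m + 1) (del p j))).isLt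
      have h3 := (τ' (del p i)).isLt
      split_ifs <;> omega
    have pp_iff : ∀ τ' : Perm (Fin (m + 1)), PP (m + 2) S (Ins τ') ↔ PP (m + 1) S' τ' := by
      intro τ'
      constructor
      · intro h j' hj'
        have hmem := (hmemS' j').mp hj'
        have hq1 := h _ (mem_of_mem_erase hmem)
        have h2 := (qq_iff τ' _ hmem).mp hq1
        rwa [del_sa] at h2
      · intro h j hj
        by_cases hji : j = i
        · subst hji
          unfold QQ
          have e1 : (Ins τ') j = ((τ' (del p j)).succ).succAbove (τ' (del p j)) := by
            conv_lhs => rw [← sa_del p j hip]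
            rw [Ins_sa]
          rw [show rot (m + 2) j = p from hp.symm, Ins_p, e1, sa_val, Fin.val_succ]
          have h3 := (τ' (del p j)).isLt
          split_ifs <;> omega
        · have hjp : j ≠ p := fun h' => hpS (h' ▸ hj)
          refine (qq_iff τ' j (mem_erase.mpr ⟨hji, hj⟩)).mpr ?_
          exact h _ ((hmemS' (del p j)).mpr
            (by rw [sa_del p j hjp]; exact mem_erase.mpr ⟨hji, hj⟩))
    have Ins_inj : Function.Injective Ins := by
      intro τ₁ τ₂ h
      have hq12 : (τ₁ (del p i)).succ = (τ₂ (del p i)).succ := by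
        rw [← Ins_p τ₁, ← Ins_p τ₂, h]
      apply Equiv.ext
      intro x
      have h2 := congrArg (fun e : Perm (Fin (m + 2)) => e (p.succAbove x)) h
      beta_reduce at h2
      rw [Ins_sa, Ins_sa, hq12] at h2
      exact Fin.succAbove_right_injective h2
    have Ins_surj : ∀ τ : Perm (Fin (m + 2)), PP (m + 2) S τ → ∃ τ', Ins τ' = τ := by
      intro τ hτ
      have hQi : (τ p).val = (τ i).val + 1 := by
        have h0 := hτ i hiS
        unfold QQ at h0
        rwa [← hp] at h0
      let τ' : Perm (Fin (m + 1)) :=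
        { toFun := fun x => del (τ p) (τ (p.succAbove x))
          invFun := fun y => del p (τ.symm ((τ p).succAbove y))
          left_inv := by
            intro x
            have hne : τ (p.succAbove x) ≠ τ p := fun h => Fin.succAbove_ne p x (τ.injective h)
            simp only
            rw [sa_del _ _ hne, Equiv.symm_apply_apply, del_sa]
          right_inv := by
            intro y
            have hne : τ.symm ((τ p).succAbove y) ≠ p := by
              intro h
              have h2 := congrArg τ h
              rw [Equiv.apply_symm_apply] at h2
              exact Fin.succAbove_ne (τ p) y h2
            simp only
            rw [sa_del _ _ hne, Equiv.apply_symm_apply, del_sa] }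
      have hτ'app : ∀ x, τ' x = del (τ p) (τ (p.succAbove x)) := fun x => rfl
      have hq' : (τ' (del p i)).succ = τ p := by
        apply Fin.ext
        rw [Fin.val_succ, hτ'app, sa_del p i hip]
        have h3 : (del (τ p) (τ i)).val
            = if (τ i).val < (τ p).val then (τ i).val else (τ i).val - 1 := rfl
        rw [h3, if_pos (by omega)]
        omega
      refine ⟨τ', ?_⟩
      apply Equiv.ext
      intro y
      by_cases hy : y = p
      · subst hy
        rw [Ins_p, hq']
      · have e := Ins_sa τ' (del p y)
        rw [sa_del p y hy] at e
        rw [e, hq', hτ'app (del p y), sa_del p y hy, sa_del _ _ (τ.injective.ne hy)]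
    have eqv : {τ' : Perm (Fin (m + 1)) // PP (m + 1) S' τ'}
        ≃ {τ : Perm (Fin (m + 1 + 1)) // PP (m + 1 + 1) S τ} := by
      refine Equiv.ofBijective (fun τ' => ⟨Ins τ'.1, (pp_iff τ'.1).mpr τ'.2⟩) ⟨?_, ?_⟩
      · intro a b hab
        exact Subtype.ext (Ins_inj (congrArg Subtype.val hab))
      · rintro ⟨τ, hτ⟩
        obtain ⟨τ'', hτ''⟩ := Ins_surj τ hτ
        exact ⟨⟨τ'', (pp_iff τ'').mp (by rw [hτ'']; exact hτ)⟩, Subtype.ext hτ''⟩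
    rw [Nat.card_congr eqv.symm, IH S' hS'card hS'univ]
    congr 1
    omega

lemma key_iff {n : ℕ} (σ : Perm (Fin n)) :
    (avoidsSucc n σ ∧ ¬ containsN1 n σ) ↔ ∀ i : Fin n, ¬ QQ n i σ⁻¹ := by
  constructor
  · rintro ⟨hA, hC⟩ i hi
    unfold QQ at hi
    have hk1 : (σ⁻¹ i).val + 1 < n := by
      have := (σ⁻¹ (rot n i)).isLt
      omega
    have e1 : σ ⟨(σ⁻¹ i).val, Nat.lt_of_succ_lt hk1⟩ = i := by
      have h : (⟨(σ⁻¹ i).val, Nat.lt_of_succ_lt hk1⟩ : Fin n) = σ⁻¹ i := Fin.ext rfl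
      rw [h]
      exact Equiv.apply_symm_apply σ i
    have e2 : σ ⟨(σ⁻¹ i).val + 1, hk1⟩ = rot n i := by
      have h : (⟨(σ⁻¹ i).val + 1, hk1⟩ : Fin n) = σ⁻¹ (rot n i) := Fin.ext hi.symm
      rw [h]
      exact Equiv.apply_symm_apply σ _
    rcases rot_val_cases i with ⟨h1, h2⟩ | ⟨h1, h2⟩
    · exact hA (σ⁻¹ i).val hk1 (by rw [e1, e2, h1])
    · refine hC ⟨(σ⁻¹ i).val, hk1, ?_, ?_⟩
      · rw [e1]; omega
      · rw [e2, h1]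
  · intro h
    constructor
    · intro k hk heq
      apply h (σ ⟨k, Nat.lt_of_succ_lt hk⟩)
      unfold QQ
      have h2 : rot n (σ ⟨k, Nat.lt_of_succ_lt hk⟩) = σ ⟨k + 1, hk⟩ := by
        apply Fin.ext
        rcases rot_val_cases (σ ⟨k, Nat.lt_of_succ_lt hk⟩) with ⟨h1, _⟩ | ⟨h1, h3⟩
        · omega
        · have := (σ ⟨k + 1, hk⟩).isLt
          omega
      rw [h2, Equiv.Perm.inv_def, Equiv.symm_apply_apply, Equiv.symm_apply_apply]
    · rintro ⟨k, hk, h1, h2⟩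
      apply h (σ ⟨k, Nat.lt_of_succ_lt hk⟩)
      unfold QQ
      have hrot : rot n (σ ⟨k, Nat.lt_of_succ_lt hk⟩) = σ ⟨k + 1, hk⟩ := by
        apply Fin.ext
        have hK := (σ ⟨k, Nat.lt_of_succ_lt hk⟩).isLt
        rcases rot_val_cases (σ ⟨k, Nat.lt_of_succ_lt hk⟩) with ⟨h3, h4⟩ | ⟨h3, h4⟩
        · omega
        · omega
      rw [hrot, Equiv.Perm.inv_def, Equiv.symm_apply_apply, Equiv.symm_apply_apply]

end Stmt4Aux

open Stmt4Aux in
theorem stmt_4 (n : ℕ) (hn : 1 ≤ n) :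
    (DCount n : ℤ) = (numDerangements n : ℤ) + (-1 : ℤ) ^ (n - 1) := by
  classical
  have h1 : DCount n = #(univ.filter fun τ : Perm (Fin n) => ∀ i, ¬ QQ n i τ) := by
    rw [DCount, Nat.card_congr (Equiv.subtypeEquiv (q := fun τ => ∀ i, ¬ QQ n i τ)
      (Equiv.inv (Perm (Fin n))) (fun σ => key_iff σ)), Nat.card_eq_fintype_card,
      Fintype.card_subtype]
  have h2 : ∀ S : Finset (Fin n),
      #(univ.filter fun τ : Perm (Fin n) => ∀ i ∈ S, QQ n i τ)
        = if S = univ then 0 else (n - #S).factorial := by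
    intro S
    by_cases hS : S = univ
    · subst hS
      rw [if_pos rfl, card_eq_zero, filter_eq_empty_iff]
      intro τ _ hPP
      exact pp_univ_empty hn τ hPP
    · rw [if_neg hS, ← Fintype.card_subtype, ← Nat.card_eq_fintype_card]
      exact card_pp #S S rfl hS
  have hIE : (#(univ.filter fun τ : Perm (Fin n) => ∀ i, ¬ QQ n i τ) : ℤ)
      = ∑ S ∈ (univ : Finset (Fin n)).powerset,
          (-1 : ℤ) ^ #S * #(univ.filter fun τ : Perm (Fin n) => ∀ i ∈ S, QQ n i τ) := by
    rw [Finset.natCast_card_filter]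
    have e1 : ∀ τ : Perm (Fin n), (if (∀ i, ¬ QQ n i τ) then (1 : ℤ) else 0)
        = ∑ S ∈ (univ.filter fun i => QQ n i τ).powerset, (-1 : ℤ) ^ #S := by
      intro τ
      rw [Finset.sum_powerset_neg_one_pow_card]
      by_cases hτ : ∀ i, ¬ QQ n i τ
      · rw [if_pos hτ, if_pos (filter_eq_empty_iff.mpr fun i _ => hτ i)]
      · rw [if_neg hτ, if_neg]
        intro hemp
        exact hτ fun i => filter_eq_empty_iff.mp hemp (mem_univ i)
    have e2 : ∀ τ : Perm (Fin n),
        (∑ S ∈ (univ.filter fun i => QQ n i τ).powerset, (-1 : ℤ) ^ #S)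
          = ∑ S ∈ (univ : Finset (Fin n)).powerset,
              if (∀ i ∈ S, QQ n i τ) then (-1 : ℤ) ^ #S else 0 := by
      intro τ
      rw [← Finset.sum_filter]
      congr 1
      ext S
      simp only [mem_filter, mem_powerset, subset_univ, true_and]
      constructor
      · exact fun hS i hi => (mem_filter.mp (hS hi)).2
      · exact fun hS x hx => mem_filter.mpr ⟨mem_univ x, hS x hx⟩
    calc (∑ τ : Perm (Fin n), if (∀ i, ¬ QQ n i τ) then (1 : ℤ) else 0)
        = ∑ τ : Perm (Fin n), ∑ S ∈ (univ : Finset (Fin n)).powerset,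
            (if (∀ i ∈ S, QQ n i τ) then (-1 : ℤ) ^ #S else 0) := by
          refine Finset.sum_congr rfl fun τ _ => ?_
          rw [e1 τ, e2 τ]
      _ = ∑ S ∈ (univ : Finset (Fin n)).powerset, ∑ τ : Perm (Fin n),
            (if (∀ i ∈ S, QQ n i τ) then (-1 : ℤ) ^ #S else 0) := Finset.sum_comm
      _ = _ := by
          refine Finset.sum_congr rfl fun S _ => ?_
          calc (∑ τ : Perm (Fin n), if (∀ i ∈ S, QQ n i τ) then (-1 : ℤ) ^ #S else 0)
              = ∑ τ : Perm (Fin n),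
                  ((-1 : ℤ) ^ #S) * (if (∀ i ∈ S, QQ n i τ) then 1 else 0) := by
                refine Finset.sum_congr rfl fun τ _ => by rw [mul_ite, mul_one, mul_zero]
            _ = ((-1 : ℤ) ^ #S) * ∑ τ : Perm (Fin n),
                  (if (∀ i ∈ S, QQ n i τ) then (1 : ℤ) else 0) := by
                rw [Finset.mul_sum]
            _ = _ := by rw [Finset.sum_boole]
  have hterm : ∀ j ∈ Finset.range (n + 1),
      (n.choose j) • ((-1 : ℤ) ^ j * ((n - j).factorial : ℤ))
        = (-1 : ℤ) ^ j * (((j + 1).ascFactorial (n - j) : ℕ) : ℤ) := by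
    intro j hj
    have hj' : j ≤ n := by
      have := Finset.mem_range.mp hj
      omega
    have hnat : n.choose j * (n - j).factorial = (j + 1).ascFactorial (n - j) := by
      have hfa : j.factorial * ((j + 1).ascFactorial (n - j)) = n.factorial := by
        rw [Nat.factorial_mul_ascFactorial]
        congr 1
        omega
      have hfc : j.factorial * (n.choose j * (n - j).factorial) = n.factorial := by
        rw [← Nat.choose_mul_factorial_mul_factorial hj']
        ring
      exact Nat.eq_of_mul_eq_mul_left (Nat.factorial_pos j) (hfc.trans hfa.symm)
    rw [nsmul_eq_mul, ← hnat]
    push_cast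
    ring
  have harith : ∑ S ∈ (univ : Finset (Fin n)).powerset,
      (-1 : ℤ) ^ #S * (if S = univ then (0 : ℤ) else ((n - #S).factorial : ℤ))
      = (numDerangements n : ℤ) + (-1 : ℤ) ^ (n - 1) := by
    have split1 : ∀ S ∈ (univ : Finset (Fin n)).powerset,
        (-1 : ℤ) ^ #S * (if S = univ then (0 : ℤ) else ((n - #S).factorial : ℤ))
          = (-1 : ℤ) ^ #S * ((n - #S).factorial : ℤ)
            - (if S = univ then (-1 : ℤ) ^ #S * ((n - #S).factorial : ℤ) else 0) := by
      intro S _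
      by_cases hS : S = univ
      · rw [if_pos hS, if_pos hS]
        ring
      · rw [if_neg hS, if_neg hS]
        ring
    rw [Finset.sum_congr rfl split1, Finset.sum_sub_distrib, Finset.sum_ite_eq']
    rw [if_pos (Finset.mem_powerset_self _)]
    rw [Finset.sum_powerset_apply_card (fun j => (-1 : ℤ) ^ j * ((n - j).factorial : ℤ))]
    rw [card_univ, Fintype.card_fin]
    rw [Finset.sum_congr rfl hterm, ← numDerangements_sum n]
    obtain ⟨t, rfl⟩ : ∃ t, n = t + 1 := ⟨n - 1, by omega⟩
    simp only [Nat.add_sub_cancel, Nat.sub_self, Nat.factorial_zero, Nat.cast_one, mul_one,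
      pow_succ]
    ring
  rw [h1, hIE, ← harith]
  refine Finset.sum_congr rfl fun S _ => ?_
  rw [h2 S, Nat.cast_ite]
  split_ifs <;> simp
end

section
/- For every integer n ≥ 1, D_n = Σ_{k=0}^{n−1} (−1)^k · n!/k!, as an identity in the integers (the usual derangement sum with the last term (−1)^n omitted). -/
open Finset

attribute [local instance] Classical.propDecidable

section Aux

/-- Pointwise pattern condition on the inverse arrangement: value `i` is
immediately followed (in position) by value `i+1` (mod `n`). Here `g = σ⁻¹`
maps values to positions. -/
def Pcond {n : ℕ} [NeZero n] (i : Fin n) (g : Equiv.Perm (Fin n)) : Prop :=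
  (g (i + 1)).val = (g i).val + 1

def satF {n : ℕ} [NeZero n] (S : Finset (Fin n)) (g : Equiv.Perm (Fin n)) : Prop :=
  ∀ i ∈ S, Pcond i g

lemma val_succAbove {m : ℕ} (p : Fin (m + 1)) (x : Fin m) :
    ((p.succAbove x : Fin (m + 1)) : ℕ) = if (x : ℕ) < (p : ℕ) then (x : ℕ) else (x : ℕ) + 1 := by
  rcases lt_or_ge (Fin.castSucc x) p with h | h
  · rw [Fin.succAbove_of_castSucc_lt _ _ h]
    have : (x : ℕ) < (p : ℕ) := h
    simp [this]
  · rw [Fin.succAbove_of_le_castSucc _ _ h]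
    have : (p : ℕ) ≤ (x : ℕ) := h
    simp [Nat.not_lt.mpr this]

lemma adj_fwd {p x y a b : ℕ} (hx : a = if x < p then x else x + 1)
    (hy : b = if y < p then y else y + 1) (h : b = a + 1) : y = x + 1 := by
  split_ifs at hx hy <;> omega

lemma adj_bwd {p x y a b : ℕ} (hx : a = if x < p then x else x + 1)
    (hy : b = if y < p then y else y + 1) (hp : x + 1 ≠ p) (h : y = x + 1) : b = a + 1 := by
  split_ifs at hx hy <;> omega

end Aux

section Step

variable {m : ℕ}

/-- Delete value `0` from a permutation of `Fin (m+2)` (order-collapse of positions,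
removing position `g 0`). -/
noncomputable def Phi (g : Equiv.Perm (Fin (m + 2))) : Equiv.Perm (Fin (m + 1)) :=
  Equiv.removeNone ((finSuccEquiv (m + 1)).symm.trans (g.trans (finSuccEquiv' (g 0))))

lemma Phi_spec (g : Equiv.Perm (Fin (m + 2))) (j : Fin (m + 1)) :
    (g 0).succAbove (Phi g j) = g j.succ := by
  set p := g 0 with hp
  set e := ((finSuccEquiv (m + 1)).symm.trans (g.trans (finSuccEquiv' p))) with he
  have h1 : e (some j) = finSuccEquiv' p (g j.succ) := by
    simp [he, Equiv.trans_apply, finSuccEquiv_symm_some]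
  have hne : g j.succ ≠ p := by
    rw [hp]
    intro hh
    exact (Fin.succ_ne_zero j) (g.injective hh)
  have h2 : finSuccEquiv' p (g j.succ) ≠ none := by
    intro hh
    apply hne
    have := congrArg (finSuccEquiv' p).symm hh
    simpa [finSuccEquiv'_symm_none] using this
  obtain ⟨y, hy⟩ := Option.ne_none_iff_exists'.mp (h1 ▸ h2)
  have h3 : some (Phi g j) = e (some j) := Equiv.removeNone_some _ ⟨y, by rw [h1]; exact hy⟩
  have h4 : finSuccEquiv' p (g j.succ) = some (Phi g j) := by rw [h3, h1]
  have := congrArg (finSuccEquiv' p).symm h4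
  simpa [finSuccEquiv'_symm_some] using this.symm

/-- Insert value `0` at position `(g' (last)) + 1`: inverse of `Phi` on the
relevant sets. -/
noncomputable def Psi (g' : Equiv.Perm (Fin (m + 1))) : Equiv.Perm (Fin (m + 2)) :=
  (finSuccEquiv (m + 1)).trans ((g'.optionCongr).trans
    (finSuccEquiv' (Fin.succ (g' (Fin.last m)))).symm)

lemma Psi_zero (g' : Equiv.Perm (Fin (m + 1))) :
    Psi g' 0 = Fin.succ (g' (Fin.last m)) := by
  simp [Psi, Equiv.trans_apply, finSuccEquiv_zero, finSuccEquiv'_symm_none]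

lemma Psi_succ (g' : Equiv.Perm (Fin (m + 1))) (j : Fin (m + 1)) :
    Psi g' j.succ = (Fin.succ (g' (Fin.last m))).succAbove (g' j) := by
  simp [Psi, Equiv.trans_apply, finSuccEquiv_succ, finSuccEquiv'_symm_some]

end Step

lemma val_add_one_of_ne_last {k : ℕ} {j : Fin (k + 1)} (h : j ≠ Fin.last k) :
    ((j + 1 : Fin (k + 1)) : ℕ) = (j : ℕ) + 1 := by
  rw [Fin.val_add_one]; simp [h]

lemma succ_add_one {m : ℕ} {j : Fin (m + 1)} (h : j ≠ Fin.last m) :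
    (j + 1).succ = j.succ + 1 := by
  have h1 : ((j + 1 : Fin (m + 1)) : ℕ) = (j : ℕ) + 1 := val_add_one_of_ne_last h
  have h2 : (j.succ : Fin (m + 2)) ≠ Fin.last (m + 1) := by
    intro hh
    apply h
    apply Fin.ext
    have := congrArg Fin.val hh
    simpa [Fin.val_succ] using this
  apply Fin.ext
  rw [Fin.val_succ, h1, val_add_one_of_ne_last h2, Fin.val_succ]

lemma card_filter_step (m : ℕ) (S : Finset (Fin (m + 2)))
    (hl : Fin.last (m + 1) ∈ S) (h0 : (0 : Fin (m + 2)) ∉ S) :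
    (univ.filter (satF S)).card
      = (univ.filter (satF (univ.filter
          (fun j : Fin (m + 1) => j.succ ∈ S.erase (Fin.last (m + 1)))))).card := by
  set S' : Finset (Fin (m + 1)) :=
    univ.filter (fun j => j.succ ∈ S.erase (Fin.last (m + 1))) with hS'
  apply Finset.card_bij' (fun g _ => Phi g) (fun g' _ => Psi g')
  · intro g hg
    rw [mem_filter] at hg ⊢
    refine ⟨mem_univ _, ?_⟩
    intro j hj
    rw [hS', mem_filter, Finset.mem_erase] at hj
    obtain ⟨-, hjne, hjS⟩ := hj
    have hjlast : j ≠ Fin.last m := by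
      intro hh; exact hjne (by rw [hh, Fin.succ_last])
    have hcon : ((g (j.succ + 1)) : ℕ) = ((g j.succ) : ℕ) + 1 := hg.2 _ hjS
    have hA := Phi_spec g j
    have hB := Phi_spec g (j + 1)
    rw [succ_add_one hjlast] at hB
    have hx : ((g j.succ) : ℕ) =
        if ((Phi g j) : ℕ) < ((g 0) : ℕ) then ((Phi g j) : ℕ) else ((Phi g j) : ℕ) + 1 := by
      rw [← hA, val_succAbove]
    have hy : ((g (j.succ + 1)) : ℕ) =
        if ((Phi g (j + 1)) : ℕ) < ((g 0) : ℕ) then ((Phi g (j + 1)) : ℕ)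
        else ((Phi g (j + 1)) : ℕ) + 1 := by
      rw [← hB, val_succAbove]
    exact adj_fwd hx hy hcon
  · intro g' hg'
    rw [mem_filter] at hg' ⊢
    refine ⟨mem_univ _, ?_⟩
    intro i hiS
    by_cases hil : i = Fin.last (m + 1)
    · subst hil
      show ((Psi g') (Fin.last (m + 1) + 1)).val = ((Psi g') (Fin.last (m + 1))).val + 1
      rw [Fin.last_add_one, Psi_zero, ← Fin.succ_last, Psi_succ, Fin.val_succ, val_succAbove]
      simp
    · have hi0 : i ≠ 0 := fun hh => h0 (hh ▸ hiS)
      obtain ⟨j, rfl⟩ := Fin.exists_succ_eq.mpr hi0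
      have hjS' : j ∈ S' := by
        rw [hS', mem_filter]
        exact ⟨mem_univ _, Finset.mem_erase.mpr ⟨hil, hiS⟩⟩
      have hjlast : j ≠ Fin.last m := fun hh => hil (by rw [hh, Fin.succ_last])
      have hcon : ((g' (j + 1)) : ℕ) = ((g' j) : ℕ) + 1 := hg'.2 _ hjS'
      show ((Psi g') (j.succ + 1)).val = ((Psi g') j.succ).val + 1
      rw [← succ_add_one hjlast, Psi_succ, Psi_succ]
      have hp : ((g' j) : ℕ) + 1 ≠ ((Fin.succ (g' (Fin.last m))) : ℕ) := by
        rw [Fin.val_succ]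
        intro hh
        exact hjlast (g'.injective (Fin.ext (by omega)))
      exact adj_bwd (val_succAbove _ _) (val_succAbove _ _) hp hcon
  · intro g hg
    rw [mem_filter] at hg
    have hcon : ((g (Fin.last (m + 1) + 1)) : ℕ) = ((g (Fin.last (m + 1))) : ℕ) + 1 :=
      hg.2 _ hl
    have h0v : ((g 0) : ℕ) = ((g (Fin.last (m + 1))) : ℕ) + 1 := by
      rwa [Fin.last_add_one] at hcon
    have hkey : Fin.succ ((Phi g) (Fin.last m)) = g 0 := by
      have hA := Phi_spec g (Fin.last m)
      rw [Fin.succ_last] at hA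
      have hval := val_succAbove (g 0) ((Phi g) (Fin.last m))
      rw [hA] at hval
      simp only [Nat.succ_eq_add_one] at hval
      apply Fin.ext
      rw [Fin.val_succ]
      split_ifs at hval with hc <;> omega
    apply Equiv.ext
    intro v
    induction v using Fin.cases with
    | zero => rw [Psi_zero, hkey]
    | succ j => rw [Psi_succ, hkey, Phi_spec]
  · intro g' _
    apply Equiv.ext
    intro j
    have h1 := Phi_spec (Psi g') j
    rw [Psi_zero, Psi_succ] at h1
    exact Fin.succAbove_right_injective h1

lemma Sprime_image (m : ℕ) (S : Finset (Fin (m + 2)))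
    (h0 : (0 : Fin (m + 2)) ∉ S) :
    (univ.filter (fun j : Fin (m + 1) => j.succ ∈ S.erase (Fin.last (m + 1)))).image Fin.succ
      = S.erase (Fin.last (m + 1)) := by
  ext v
  simp only [Finset.mem_image, mem_filter, mem_univ, true_and]
  constructor
  · rintro ⟨j, hj, rfl⟩; exact hj
  · intro hv
    have hv0 : v ≠ 0 := by
      intro hh
      exact h0 (hh ▸ (Finset.mem_of_mem_erase hv))
    obtain ⟨j, rfl⟩ := Fin.exists_succ_eq.mpr hv0
    exact ⟨j, hv, rfl⟩

lemma Sprime_card (m : ℕ) (S : Finset (Fin (m + 2)))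
    (hl : Fin.last (m + 1) ∈ S) (h0 : (0 : Fin (m + 2)) ∉ S) :
    (univ.filter (fun j : Fin (m + 1) => j.succ ∈ S.erase (Fin.last (m + 1)))).card
      = S.card - 1 := by
  have h1 := Sprime_image m S h0
  have h2 := Finset.card_image_of_injective
    (univ.filter (fun j : Fin (m + 1) => j.succ ∈ S.erase (Fin.last (m + 1))))
    (Fin.succ_injective (m + 1))
  rw [h1] at h2
  rw [← h2, Finset.card_erase_of_mem hl]

lemma Sprime_ne_univ (m : ℕ) (S : Finset (Fin (m + 2))) :
    (univ.filter (fun j : Fin (m + 1) => j.succ ∈ S.erase (Fin.last (m + 1)))) ≠ univ := by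
  intro hh
  have : Fin.last m ∈ univ.filter
      (fun j : Fin (m + 1) => j.succ ∈ S.erase (Fin.last (m + 1))) :=
    Finset.eq_univ_iff_forall.mp hh (Fin.last m)
  rw [mem_filter, Fin.succ_last] at this
  exact (Finset.notMem_erase _ _) this.2

lemma card_filter_rot {n : ℕ} [NeZero n] (S : Finset (Fin n)) (c : Fin n) :
    (univ.filter (satF (S.image (· + c)))).card = (univ.filter (satF S)).card := by
  apply Finset.card_bij' (fun g _ => (Equiv.addRight c).trans g)
    (fun g _ => (Equiv.addRight c).symm.trans g)
  · intro g hg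
    rw [mem_filter] at hg ⊢
    refine ⟨mem_univ _, ?_⟩
    intro j hj
    have hjc : j + c ∈ S.image (· + c) := Finset.mem_image_of_mem _ hj
    have hcon : ((g (j + c + 1)) : ℕ) = ((g (j + c)) : ℕ) + 1 := hg.2 _ hjc
    show ((g ((j + 1) + c)) : ℕ) = ((g (j + c)) : ℕ) + 1
    rw [show j + 1 + c = j + c + 1 by abel]
    exact hcon
  · intro g hg
    rw [mem_filter] at hg ⊢
    refine ⟨mem_univ _, ?_⟩
    intro i hi
    rw [Finset.mem_image] at hi
    obtain ⟨j, hj, rfl⟩ := hi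
    have hcon : ((g (j + 1)) : ℕ) = ((g j) : ℕ) + 1 := hg.2 _ hj
    have e1 : ((Equiv.addRight c).symm.trans g) (j + c) = g j := by
      rw [Equiv.trans_apply]
      congr 1
      simp [Equiv.addRight_symm]
    have e2 : ((Equiv.addRight c).symm.trans g) (j + c + 1) = g (j + 1) := by
      rw [Equiv.trans_apply]
      congr 1
      simp [Equiv.addRight_symm]
      abel
    show ((((Equiv.addRight c).symm.trans g) (j + c + 1)) : ℕ)
      = ((((Equiv.addRight c).symm.trans g) (j + c)) : ℕ) + 1
    rw [e1, e2]
    exact hcon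
  · intro g _
    apply Equiv.ext; intro v
    simp [Equiv.trans_apply]
  · intro g _
    apply Equiv.ext; intro v
    simp [Equiv.trans_apply]

open Fin.NatCast in
lemma exists_chain_end {n : ℕ} [NeZero n] (S : Finset (Fin n)) (h0 : S ≠ ∅) (hu : S ≠ univ) :
    ∃ i ∈ S, i + 1 ∉ S := by
  by_contra h
  push_neg at h
  obtain ⟨i0, hi0⟩ := Finset.nonempty_iff_ne_empty.mpr h0
  have key : ∀ k : ℕ, i0 + (k : Fin n) ∈ S := by
    intro k
    induction k with
    | zero => simpa using hi0
    | succ k ih =>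
        have := h _ ih
        rw [Nat.cast_add, Nat.cast_one, ← add_assoc]
        exact this
  apply hu
  apply Finset.eq_univ_iff_forall.mpr
  intro j
  have := key ((j - i0).val)
  rwa [Fin.cast_val_eq_self, add_comm i0, sub_add_cancel] at this

lemma A_univ {n : ℕ} [NeZero n] :
    (univ.filter (satF (univ : Finset (Fin n)))).card = 0 := by
  rw [Finset.card_eq_zero, Finset.filter_eq_empty_iff]
  intro g _
  intro hsat
  have hn : 0 < n := Nat.pos_of_ne_zero (NeZero.ne n)
  set L : Fin n := ⟨n - 1, by omega⟩ with hL
  have hPL : ((g (g.symm L + 1)) : ℕ) = ((g (g.symm L)) : ℕ) + 1 :=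
    hsat (g.symm L) (mem_univ _)
  have hL' : ((g (g.symm L)) : ℕ) = n - 1 := by rw [Equiv.apply_symm_apply]
  have hlt := (g (g.symm L + 1)).isLt
  omega

lemma A_card : ∀ (m : ℕ) (S : Finset (Fin (m + 1))), S ≠ univ →
    (univ.filter (satF S)).card = (m + 1 - S.card).factorial := by
  intro m
  induction m with
  | zero =>
      intro S hS
      have hS0 : S = ∅ := by
        rcases Finset.eq_empty_or_nonempty S with h | h
        · exact h
        · exfalso
          apply hS
          apply Finset.eq_univ_of_card
          have h1 : 1 ≤ S.card := Finset.Nonempty.card_pos h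
          have h2 : S.card ≤ Fintype.card (Fin 1) := Finset.card_le_univ S
          simp only [Fintype.card_fin] at h2 ⊢
          omega
      subst hS0
      rw [Finset.filter_true_of_mem (fun g _ => by intro i hi; simp at hi)]
      simp [Finset.card_univ, Fintype.card_perm]
  | succ m ih =>
      intro S hS
      by_cases hS0 : S = ∅
      · subst hS0
        rw [Finset.filter_true_of_mem (fun g _ => by intro i hi; simp at hi)]
        simp [Finset.card_univ, Fintype.card_perm]
      · obtain ⟨i, hiS, hi1⟩ := exists_chain_end S hS0 hS
        set c : Fin (m + 2) := Fin.last (m + 1) - i with hc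
        set S₂ : Finset (Fin (m + 2)) := S.image (· + c) with hS₂
        have hl : Fin.last (m + 1) ∈ S₂ := by
          rw [hS₂, Finset.mem_image]
          exact ⟨i, hiS, by rw [hc]; abel⟩
        have h0 : (0 : Fin (m + 2)) ∉ S₂ := by
          rw [hS₂, Finset.mem_image]
          rintro ⟨j, hj, hj0⟩
          have h1 : (i + 1) + c = 0 := by
            rw [hc]
            have := Fin.last_add_one (m + 1)
            calc i + 1 + (Fin.last (m + 1) - i) = Fin.last (m + 1) + 1 := by abel
            _ = 0 := Fin.last_add_one (m + 1)
          have : j = i + 1 := by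
            have := hj0.trans h1.symm
            exact add_right_cancel this
          exact hi1 (this ▸ hj)
        have hrot : (univ.filter (satF S)).card = (univ.filter (satF S₂)).card :=
          (card_filter_rot S c).symm
        have hstep := card_filter_step m S₂ hl h0
        set S' : Finset (Fin (m + 1)) :=
          univ.filter (fun j : Fin (m + 1) => j.succ ∈ S₂.erase (Fin.last (m + 1))) with hS'
        have hcard' : S'.card = S.card - 1 := by
          rw [hS', Sprime_card m S₂ hl h0, hS₂,
            Finset.card_image_of_injective _ (add_left_injective c)]
        have hne' : S' ≠ univ := Sprime_ne_univ m S₂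
        have hih := ih S' hne'
        rw [hrot, hstep, hih, hcard']
        congr 1
        have hszl : S.card ≥ 1 := Finset.Nonempty.card_pos (Finset.nonempty_iff_ne_empty.mpr hS0)
        have hszu : S.card < m + 2 := by
          have h1 : S.card ≤ Fintype.card (Fin (m + 2)) := Finset.card_le_univ S
          simp only [Fintype.card_fin] at h1
          rcases lt_or_eq_of_le h1 with h | h
          · exact h
          · exact absurd (Finset.eq_univ_of_card S (by simp [h])) hS
        omega

lemma IE_sum {n : ℕ} [NeZero n] :
    ((univ.filter (fun g : Equiv.Perm (Fin n) => ∀ i : Fin n, ¬ Pcond i g)).card : ℤ)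
      = ∑ S ∈ (univ : Finset (Fin n)).powerset,
          (-1 : ℤ) ^ S.card * ((univ.filter (satF S)).card : ℤ) := by
  have key : ∀ g : Equiv.Perm (Fin n),
      (if (∀ i : Fin n, ¬ Pcond i g) then (1 : ℤ) else 0)
        = ∑ S ∈ (univ : Finset (Fin n)).powerset,
            (-1 : ℤ) ^ S.card * (if satF S g then (1 : ℤ) else 0) := by
    intro g
    calc (if (∀ i : Fin n, ¬ Pcond i g) then (1 : ℤ) else 0)
        = ∏ i ∈ (univ : Finset (Fin n)), (if ¬ Pcond i g then (1 : ℤ) else 0) := by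
          rw [Finset.prod_boole]
          rcases em (∀ i : Fin n, ¬ Pcond i g) with h | h
          · simp [h]
          · have h' : ¬ (∀ i ∈ (univ : Finset (Fin n)), ¬ Pcond i g) := by simpa using h
            simp [h, h']
      _ = ∏ i ∈ (univ : Finset (Fin n)), ((if Pcond i g then (-1 : ℤ) else 0) + 1) :=
          Finset.prod_congr rfl (fun i _ => by split_ifs <;> norm_num)
      _ = ∑ T ∈ (univ : Finset (Fin n)).powerset,
            (∏ i ∈ T, (if Pcond i g then (-1 : ℤ) else 0)) * ∏ _i ∈ univ \ T, (1 : ℤ) :=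
          Finset.prod_add _ _ _
      _ = ∑ T ∈ (univ : Finset (Fin n)).powerset,
            (-1 : ℤ) ^ T.card * (if satF T g then (1 : ℤ) else 0) := by
          apply Finset.sum_congr rfl
          intro T _
          rw [Finset.prod_const_one, mul_one]
          have hh : ∀ i ∈ T, (if Pcond i g then (-1 : ℤ) else 0)
              = (-1) * (if Pcond i g then (1 : ℤ) else 0) :=
            fun i _ => by split_ifs <;> norm_num
          rw [Finset.prod_congr rfl hh, Finset.prod_mul_distrib, Finset.prod_const,
            Finset.prod_boole]
          rcases em (∀ i ∈ T, Pcond i g) with h | h <;> simp [h, (show satF T g ↔ ∀ i ∈ T, Pcond i g from Iff.rfl)]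
  rw [Finset.card_filter]
  push_cast
  rw [Finset.sum_congr rfl (fun g _ => key g), Finset.sum_comm]
  apply Finset.sum_congr rfl
  intro S _
  rw [← Finset.mul_sum]
  congr 1
  rw [Finset.card_filter]
  push_cast
  rfl

lemma nat_choose_fact (n k : ℕ) (h : k ≤ n) :
    n.choose k * (n - k).factorial = n.factorial / k.factorial := by
  have h1 := Nat.choose_mul_factorial_mul_factorial h
  symm
  apply Nat.div_eq_of_eq_mul_left (Nat.factorial_pos k)
  rw [← h1]
  ring

lemma count_formula (m : ℕ) :
    ((univ.filter (fun g : Equiv.Perm (Fin (m + 1)) => ∀ i : Fin (m + 1), ¬ Pcond i g)).card : ℤ)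
      = ∑ k ∈ Finset.range (m + 1), (-1 : ℤ) ^ k * (((m + 1).factorial / k.factorial : ℕ) : ℤ) := by
  have hcu : (univ : Finset (Fin (m + 1))).card = m + 1 := by simp
  rw [IE_sum, Finset.powerset_card_disjiUnion]
  erw [Finset.sum_disjiUnion]
  rw [hcu,
    Finset.sum_range_succ]
  have hlast : ∑ S ∈ Finset.powersetCard (m + 1) (univ : Finset (Fin (m + 1))),
      (-1 : ℤ) ^ S.card * ((univ.filter (satF S)).card : ℤ) = 0 := by
    have hps := Finset.powersetCard_self (univ : Finset (Fin (m + 1)))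
    rw [hcu] at hps
    rw [hps, Finset.sum_singleton, A_univ]
    simp
  rw [hlast, add_zero]
  apply Finset.sum_congr rfl
  intro k hk
  rw [Finset.mem_range] at hk
  have hterm : ∀ S ∈ Finset.powersetCard k (univ : Finset (Fin (m + 1))),
      (-1 : ℤ) ^ S.card * ((univ.filter (satF S)).card : ℤ)
        = (-1 : ℤ) ^ k * ((m + 1 - k).factorial : ℤ) := by
    intro S hS
    rw [Finset.mem_powersetCard] at hS
    obtain ⟨-, hSc⟩ := hS
    have hSne : S ≠ univ := by
      intro hh
      rw [hh, hcu] at hSc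
      omega
    rw [A_card m S hSne, hSc]
  rw [Finset.sum_congr rfl hterm, Finset.sum_const, Finset.card_powersetCard, hcu,
    nsmul_eq_mul, ← nat_choose_fact (m + 1) k (by omega)]
  push_cast
  ring

lemma equiv_pred (m : ℕ) (σ : Equiv.Perm (Fin (m + 1))) :
    (avoidsSucc (m + 1) σ ∧ ¬ containsN1 (m + 1) σ) ↔ ∀ i : Fin (m + 1), ¬ Pcond i σ⁻¹ := by
  constructor
  · rintro ⟨hA, hN⟩ i hP
    have hP' : ((σ⁻¹ (i + 1)) : ℕ) = ((σ⁻¹ i) : ℕ) + 1 := hP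
    have hlt : ((σ⁻¹ (i + 1)) : ℕ) < m + 1 := (σ⁻¹ (i + 1)).isLt
    have hklt : ((σ⁻¹ i) : ℕ) + 1 < m + 1 := by omega
    have hk : σ ⟨((σ⁻¹ i) : ℕ), Nat.lt_of_succ_lt hklt⟩ = i := by
      rw [show (⟨((σ⁻¹ i) : ℕ), Nat.lt_of_succ_lt hklt⟩ : Fin (m + 1)) = σ⁻¹ i from
        Fin.ext rfl]
      exact σ.apply_symm_apply i
    have hk1 : σ ⟨((σ⁻¹ i) : ℕ) + 1, hklt⟩ = i + 1 := by
      rw [show (⟨((σ⁻¹ i) : ℕ) + 1, hklt⟩ : Fin (m + 1)) = σ⁻¹ (i + 1) from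
        Fin.ext hP'.symm]
      exact σ.apply_symm_apply (i + 1)
    by_cases hil : i = Fin.last m
    · apply hN
      refine ⟨((σ⁻¹ i) : ℕ), hklt, ?_, ?_⟩
      · rw [hk, hil]
        simp
      · rw [hk1, hil, Fin.last_add_one]
        rfl
    · exact hA _ hklt (by rw [hk1, hk, val_add_one_of_ne_last hil])
  · intro h
    constructor
    · intro k hk heq
      set i := σ ⟨k, Nat.lt_of_succ_lt hk⟩ with hi
      have hlt2 : (i : ℕ) + 1 < m + 1 := by
        have := (σ ⟨k + 1, hk⟩).isLt
        omega
      have hine : i ≠ Fin.last m := by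
        intro hh
        rw [hh] at hlt2
        simp at hlt2
      have hsk1 : σ ⟨k + 1, hk⟩ = i + 1 :=
        Fin.ext (by rw [heq, val_add_one_of_ne_last hine])
      apply h i
      show ((σ⁻¹ (i + 1)) : ℕ) = ((σ⁻¹ i) : ℕ) + 1
      have e1 : σ⁻¹ (i + 1) = ⟨k + 1, hk⟩ := by
        rw [← hsk1]
        exact σ.symm_apply_apply _
      have e2 : σ⁻¹ i = ⟨k, Nat.lt_of_succ_lt hk⟩ := by
        rw [hi]
        exact σ.symm_apply_apply _
      rw [e1, e2]
    · rintro ⟨k, hk, h1, h2⟩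
      set i := σ ⟨k, Nat.lt_of_succ_lt hk⟩ with hi
      have hil : i = Fin.last m := Fin.ext (by simpa using h1)
      have hs1 : σ ⟨k + 1, hk⟩ = i + 1 := by
        rw [hil, Fin.last_add_one]
        exact Fin.ext (by simpa using h2)
      apply h i
      show ((σ⁻¹ (i + 1)) : ℕ) = ((σ⁻¹ i) : ℕ) + 1
      have e1 : σ⁻¹ (i + 1) = ⟨k + 1, hk⟩ := by
        rw [← hs1]
        exact σ.symm_apply_apply _
      have e2 : σ⁻¹ i = ⟨k, Nat.lt_of_succ_lt hk⟩ := by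
        rw [hi]
        exact σ.symm_apply_apply _
      rw [e1, e2]

lemma DCount_eq (m : ℕ) :
    DCount (m + 1)
      = (univ.filter
          (fun g : Equiv.Perm (Fin (m + 1)) => ∀ i : Fin (m + 1), ¬ Pcond i g)).card := by
  rw [DCount, Nat.card_eq_fintype_card, Fintype.card_subtype]
  refine Finset.card_bij' (fun σ _ => σ⁻¹) (fun g _ => g⁻¹) ?_ ?_ ?_ ?_
  · intro σ hσ
    rw [mem_filter] at hσ ⊢
    exact ⟨mem_univ _, (equiv_pred m σ).mp hσ.2⟩
  · intro g hg
    rw [mem_filter] at hg ⊢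
    refine ⟨mem_univ _, (equiv_pred m g⁻¹).mpr ?_⟩
    rw [inv_inv]
    exact hg.2
  · intro σ _
    exact inv_inv σ
  · intro g _
    exact inv_inv g

theorem stmt_5 (n : ℕ) (hn : 1 ≤ n) :
    (DCount n : ℤ) =
      ∑ k ∈ Finset.range n, (-1 : ℤ) ^ k * ((n.factorial / k.factorial : ℕ) : ℤ) := by
  obtain ⟨m, rfl⟩ : ∃ m, n = m + 1 := ⟨n - 1, by omega⟩
  rw [DCount_eq]
  exact count_formula m
end

section
/- For every integer n ≥ 2, the recursion D_n = n·(D_{n−1} + (−1)^{n−1}) holds, as an identity in the integers. -/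
open Finset Equiv

def fskip (m a : ℕ) (x : Fin (m + 1)) : Fin (m + 2) :=
  ⟨if x.val < a then x.val else x.val + 1, by have := x.isLt; split <;> omega⟩

def fdrop (m a : ℕ) (w : Fin (m + 2)) : Fin (m + 1) :=
  ⟨if w.val < a then min w.val m else w.val - 1, by have := w.isLt; split <;> omega⟩

lemma fdrop_fskip (m a : ℕ) (x : Fin (m+1)) : fdrop m a (fskip m a x) = x := by
  have := x.isLt
  apply Fin.ext
  simp only [fdrop, fskip, Nat.min_def]
  split <;> split <;> omega

lemma fskip_val_ne (m a : ℕ) (x : Fin (m+1)) : (fskip m a x).val ≠ a := by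
  simp only [fskip]; split <;> omega

lemma fskip_fdrop (m a : ℕ) (ha : a ≤ m+1) (w : Fin (m+2)) (hw : w.val ≠ a) :
    fskip m a (fdrop m a w) = w := by
  have := w.isLt
  apply Fin.ext
  simp only [fdrop, fskip, Nat.min_def]
  split <;> split <;> omega

lemma fdrop_inj (m a : ℕ) (ha : a ≤ m+1) (w w' : Fin (m+2)) (hw : w.val ≠ a) (hw' : w'.val ≠ a)
    (h : fdrop m a w = fdrop m a w') : w = w' := by
  rw [← fskip_fdrop m a ha w hw, ← fskip_fdrop m a ha w' hw', h]

lemma add_one_val (N : ℕ) (x : Fin (N+1)) :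
    (x + 1).val = if x.val = N then 0 else x.val + 1 := by
  have hx := x.isLt
  rcases Nat.eq_zero_or_pos N with rfl | hN
  · have : x.val = 0 := by omega
    simp [this, Fin.add_def]
  rw [Fin.add_def]
  simp only [Fin.val_one']
  rw [Nat.mod_eq_of_lt (show 1 < N + 1 by omega)]
  rcases Nat.eq_or_lt_of_le (Nat.le_of_lt_succ hx) with h | h
  · rw [if_pos h, h, Nat.mod_self]
  · rw [if_neg (by omega), Nat.mod_eq_of_lt (by omega)]

lemma fdrop_add_one (m : ℕ) (u w : Fin (m+2)) (hw : w ≠ u) (hw1 : w + 1 ≠ u) :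
    fdrop m u.val (w + 1) = fdrop m u.val w + 1 := by
  have hu := u.isLt; have hwlt := w.isLt
  have hwv : w.val ≠ u.val := fun h => hw (Fin.ext h)
  have hw1v : (w + 1).val ≠ u.val := fun h => hw1 (Fin.ext h)
  rw [add_one_val (m+1) w] at hw1v
  apply Fin.ext
  rw [add_one_val m (fdrop m u.val w)]
  simp only [fdrop]
  rw [add_one_val (m+1) w]
  simp only [Nat.min_def]
  split_ifs at hw1v ⊢ <;> omega

lemma fskip_mk_eq (m a q : ℕ) (h : q < m+1) (r : ℕ) (hr : r < m+2)
    (he : (if q < a then q else q + 1) = r) : fskip m a ⟨q, h⟩ = ⟨r, hr⟩ := Fin.ext he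
lemma fdrop_mk_eq (m a q : ℕ) (h : q < m+2) (r : ℕ) (hr : r < m+1)
    (he : (if q < a then min q m else q - 1) = r) : fdrop m a ⟨q, h⟩ = ⟨r, hr⟩ := Fin.ext he

def squish (m : ℕ) (σ : Equiv.Perm (Fin (m+2))) (t b : ℕ) (ht : t < m+2) (hb : b < m+2)
    (hσ : σ ⟨t, ht⟩ = ⟨b, hb⟩) : Equiv.Perm (Fin (m+1)) where
  toFun j := fdrop m b (σ (fskip m t j))
  invFun x := fdrop m t (σ.symm (fskip m b x))
  left_inv j := by
    dsimp only
    have h1 : (σ (fskip m t j)).val ≠ b := by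
      intro h
      have : σ (fskip m t j) = σ ⟨t, ht⟩ := by rw [hσ]; exact Fin.ext h
      exact fskip_val_ne m t j (congrArg Fin.val (σ.injective this))
    rw [fskip_fdrop m b (by omega) _ h1, Equiv.symm_apply_apply,
      fdrop_fskip m t j]
  right_inv x := by
    dsimp only
    have h1 : (σ.symm (fskip m b x)).val ≠ t := by
      intro h
      have : σ.symm (fskip m b x) = ⟨t, ht⟩ := Fin.ext h
      have := congrArg σ this
      rw [Equiv.apply_symm_apply, hσ] at this
      exact fskip_val_ne m b x (congrArg Fin.val this)
    rw [fskip_fdrop m t (by omega) _ h1, Equiv.apply_symm_apply,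
      fdrop_fskip m b x]

def expand (m : ℕ) (τ : Equiv.Perm (Fin (m+1))) (t b : ℕ) (ht : t < m+2) (hb : b < m+2) :
    Equiv.Perm (Fin (m+2)) where
  toFun i := if i.val = t then ⟨b, hb⟩ else fskip m b (τ (fdrop m t i))
  invFun w := if w.val = b then ⟨t, ht⟩ else fskip m t (τ.symm (fdrop m b w))
  left_inv i := by
    dsimp only
    by_cases hi : i.val = t
    · rw [if_pos hi]
      rw [if_pos rfl]
      exact (Fin.ext hi).symm
    · rw [if_neg hi, if_neg (fskip_val_ne m b _), fdrop_fskip, Equiv.symm_apply_apply,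
        fskip_fdrop m t (by omega) i hi]
  right_inv w := by
    dsimp only
    by_cases hw : w.val = b
    · rw [if_pos hw, if_pos rfl]
      exact (Fin.ext hw).symm
    · rw [if_neg hw, if_neg (fskip_val_ne m t _), fdrop_fskip, Equiv.apply_symm_apply,
        fskip_fdrop m b (by omega) w hw]

lemma squish_apply (m σ t b ht hb hσ) (j : Fin (m+1)) :
    squish m σ t b ht hb hσ j = fdrop m b (σ (fskip m t j)) := rfl
lemma squish_symm_apply (m σ t b ht hb hσ) (x : Fin (m+1)) :
    (squish m σ t b ht hb hσ).symm x = fdrop m t (σ.symm (fskip m b x)) := rfl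
lemma expand_apply (m τ t b ht hb) (i : Fin (m+2)) :
    expand m τ t b ht hb i = if i.val = t then ⟨b, hb⟩ else fskip m b (τ (fdrop m t i)) := rfl
lemma expand_symm_apply (m τ t b ht hb) (w : Fin (m+2)) :
    (expand m τ t b ht hb).symm w = if w.val = b then ⟨t, ht⟩ else fskip m t (τ.symm (fdrop m b w)) := rfl

def ReqS (N : ℕ) (σ : Equiv.Perm (Fin (N+1))) (v : Fin (N+1)) : Prop :=
  ∃ (k : ℕ) (h : k + 1 < N+1), σ ⟨k, Nat.lt_of_succ_lt h⟩ = v ∧ σ ⟨k + 1, h⟩ = v + 1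

lemma ReqS.k_lt {N σ v} (h : ReqS N σ v) : (σ.symm v).val + 1 < N+1 := by
  obtain ⟨k, hk, h1, h2⟩ := h
  have he : σ.symm v = ⟨k, Nat.lt_of_succ_lt hk⟩ := by rw [← h1, Equiv.symm_apply_apply]
  rw [he]; exact hk

lemma ReqS.succ {N σ v} (h : ReqS N σ v) : σ ⟨(σ.symm v).val + 1, h.k_lt⟩ = v + 1 := by
  obtain ⟨k, hk, h1, h2⟩ := h
  have he : σ.symm v = ⟨k, Nat.lt_of_succ_lt hk⟩ := by rw [← h1, Equiv.symm_apply_apply]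
  have hv : (σ.symm v).val = k := congrArg Fin.val he
  simp only [hv]
  exact h2

section Main
variable (m : ℕ) (v : Fin (m+2))

lemma hva' : v.val ≠ (v+1).val := by
  rw [add_one_val]; split <;> omega

noncomputable def delP (σ : Equiv.Perm (Fin (m+2))) (h : ReqS (m+1) σ v) : Equiv.Perm (Fin (m+1)) :=
  squish m σ ((σ.symm v).val + 1) (v+1).val h.k_lt (v+1).isLt h.succ

noncomputable def insP (τ : Equiv.Perm (Fin (m+1))) : Equiv.Perm (Fin (m+2)) :=
  expand m τ ((τ.symm (fdrop m (v+1).val v)).val + 1) (v+1).val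
    (by have := (τ.symm (fdrop m (v+1).val v)).isLt; omega) (v+1).isLt

lemma insP_req (τ : Equiv.Perm (Fin (m+1))) : ReqS (m+1) (insP m v τ) v := by
  obtain ⟨p, hplt, hp⟩ : ∃ p, p < m+1 ∧ (τ.symm (fdrop m (v+1).val v)).val = p :=
    ⟨_, (τ.symm _).isLt, rfl⟩
  have hv1 := (v+1).isLt
  refine ⟨p, by omega, ?_, ?_⟩
  · simp only [insP, expand_apply, hp]
    rw [if_neg (show ¬(p = p+1) by omega),
      fdrop_mk_eq m (p+1) p (by omega) p hplt (by split <;> omega),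
      show (⟨p, hplt⟩ : Fin (m+1)) = τ.symm (fdrop m (v+1).val v) from Fin.ext hp.symm,
      Equiv.apply_symm_apply, fskip_fdrop m _ (by omega) v (hva' m v)]
  · simp only [insP, expand_apply, hp]
    simp only [if_true]

lemma delP_mem (σ : Equiv.Perm (Fin (m+2))) (hσv : ReqS (m+1) σ v) (w : Fin (m+2))
    (hwv : w ≠ v) (hwu : w ≠ v+1) (hw1u : w + 1 ≠ v + 1) (hw : ReqS (m+1) σ w) :
    ReqS m (delP m v σ hσv) (fdrop m (v+1).val w) := by
  obtain ⟨k', hk', e1, e2⟩ := hw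
  obtain ⟨k, hK, hkeq⟩ : ∃ k, k + 1 < m+2 ∧ (σ.symm v).val = k := ⟨_, hσv.k_lt, rfl⟩
  have eu : σ ⟨k+1, hK⟩ = v + 1 := by have := hσv.succ; simp only [hkeq] at this; exact this
  have hk'ne : k' ≠ k + 1 := fun h => hwu (by subst h; exact e1.symm.trans eu)
  have hk1ne : k' + 1 ≠ k + 1 := fun h => hw1u (by
    rw [show w + 1 = σ ⟨k'+1, hk'⟩ from e2.symm,
      show (⟨k'+1, hk'⟩ : Fin (m+2)) = ⟨k+1, hK⟩ from Fin.ext h, eu])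
  have dap : ∀ j : Fin (m+1), delP m v σ hσv j = fdrop m (v+1).val (σ (fskip m (k+1) j)) := by
    intro j; simp only [delP, squish_apply, hkeq]
  rcases Nat.lt_or_ge k' (k+1) with hc | hc
  · refine ⟨k', by omega, ?_, ?_⟩
    · rw [dap, fskip_mk_eq m (k+1) k' (by omega) k' (Nat.lt_of_succ_lt hk') (by split <;> omega), e1]
    · rw [dap, fskip_mk_eq m (k+1) (k'+1) (by omega) (k'+1) hk' (by split <;> omega), e2]
      exact fdrop_add_one m (v+1) w hwu hw1u
  · have hc' : k + 1 < k' := by omega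
    refine ⟨k' - 1, by omega, ?_, ?_⟩
    · rw [dap, fskip_mk_eq m (k+1) (k'-1) (by omega) k' (Nat.lt_of_succ_lt hk') (by split <;> omega), e1]
    · rw [dap, fskip_mk_eq m (k+1) (k'-1+1) (by omega) (k'+1) hk' (by split <;> omega), e2]
      exact fdrop_add_one m (v+1) w hwu hw1u

lemma insP_mem (τ : Equiv.Perm (Fin (m+1))) (w : Fin (m+2)) (hwv : w ≠ v) (hwu : w ≠ v+1)
    (hw1u : w + 1 ≠ v + 1) (hw : ReqS m τ (fdrop m (v+1).val w)) :
    ReqS (m+1) (insP m v τ) w := by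
  obtain ⟨j', hj', f1, f2⟩ := hw
  obtain ⟨p, hplt, hp⟩ : ∃ p, p < m+1 ∧ (τ.symm (fdrop m (v+1).val v)).val = p :=
    ⟨_, (τ.symm _).isLt, rfl⟩
  have hv1 := (v+1).isLt
  have hwva : w.val ≠ (v+1).val := fun hh => hwu (Fin.ext hh)
  have hw1va : (w+1).val ≠ (v+1).val := fun hh => hw1u (Fin.ext hh)
  have hvva : v.val ≠ (v+1).val := hva' m v
  have f2' : τ ⟨j'+1, hj'⟩ = fdrop m (v+1).val (w+1) := by
    rw [f2, fdrop_add_one m (v+1) w hwu hw1u]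
  have hj'p : j' ≠ p := by
    intro h
    apply hwv
    apply fdrop_inj m (v+1).val (by omega) w v hwva hvva
    rw [← f1]
    rw [show (⟨j', Nat.lt_of_succ_lt hj'⟩ : Fin (m+1)) = τ.symm (fdrop m (v+1).val v) from
      Fin.ext (by simp only [hp]; exact h), Equiv.apply_symm_apply]
  have iap : ∀ i : Fin (m+2), insP m v τ i =
      if i.val = p+1 then ⟨(v+1).val, hv1⟩ else fskip m (v+1).val (τ (fdrop m (p+1) i)) := by
    intro i; simp only [insP, expand_apply, hp]
  rcases Nat.lt_or_ge j' p with hc | hc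
  · refine ⟨j', by omega, ?_, ?_⟩
    · rw [iap, if_neg (show ¬(j' = p+1) by omega),
        fdrop_mk_eq m (p+1) j' (by omega) j' (by omega) (by split <;> omega), f1,
        fskip_fdrop m _ (by omega) w hwva]
    · rw [iap, if_neg (show ¬(j'+1 = p+1) by omega),
        fdrop_mk_eq m (p+1) (j'+1) (by omega) (j'+1) hj' (by split <;> omega), f2',
        fskip_fdrop m _ (by omega) (w+1) hw1va]
  · have hc' : p < j' := by omega
    refine ⟨j'+1, by omega, ?_, ?_⟩
    · rw [iap, if_neg (show ¬(j'+1 = p+1) by omega),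
        fdrop_mk_eq m (p+1) (j'+1) (by omega) j' (by omega) (by split <;> omega), f1,
        fskip_fdrop m _ (by omega) w hwva]
    · rw [iap, if_neg (show ¬(j'+1+1 = p+1) by omega),
        fdrop_mk_eq m (p+1) (j'+1+1) (by omega) (j'+1) hj' (by split <;> omega), f2',
        fskip_fdrop m _ (by omega) (w+1) hw1va]

lemma insP_delP (σ : Equiv.Perm (Fin (m+2))) (hσv : ReqS (m+1) σ v) :
    insP m v (delP m v σ hσv) = σ := by
  obtain ⟨k, hK, hkeq⟩ : ∃ k, k+1 < m+2 ∧ (σ.symm v).val = k := ⟨_, hσv.k_lt, rfl⟩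
  have eu : σ ⟨k+1, hK⟩ = v+1 := by have := hσv.succ; simp only [hkeq] at this; exact this
  have hv1 := (v+1).isLt
  have hvva := hva' m v
  have hp : ((delP m v σ hσv).symm (fdrop m (v+1).val v)).val = k := by
    simp only [delP, squish_symm_apply, hkeq]
    rw [fskip_fdrop m _ (by omega) v hvva]
    rw [show σ.symm v = ⟨k, by omega⟩ from Fin.ext hkeq]
    rw [fdrop_mk_eq m (k+1) k (by omega) k (by omega) (by split <;> omega)]
  apply Equiv.ext; intro i
  have iap : insP m v (delP m v σ hσv) i = if i.val = k+1 then ⟨(v+1).val, hv1⟩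
      else fskip m (v+1).val ((delP m v σ hσv) (fdrop m (k+1) i)) := by
    simp only [insP, expand_apply, hp]
  rw [iap]
  by_cases hi : i.val = k+1
  · rw [if_pos hi, show i = (⟨k+1, hK⟩ : Fin (m+2)) from Fin.ext hi, eu]
  · rw [if_neg hi]
    simp only [delP, squish_apply, hkeq]
    rw [fskip_fdrop m (k+1) (by omega) i hi]
    have hσi : (σ i).val ≠ (v+1).val := by
      intro hh
      apply hi
      have h2 : σ i = σ ⟨k+1, hK⟩ := by rw [eu]; exact Fin.ext hh
      exact congrArg Fin.val (σ.injective h2)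
    rw [fskip_fdrop m _ (by omega) (σ i) hσi]

lemma delP_insP (τ : Equiv.Perm (Fin (m+1))) (h : ReqS (m+1) (insP m v τ) v) :
    delP m v (insP m v τ) h = τ := by
  obtain ⟨p, hplt, hp⟩ : ∃ p, p < m+1 ∧ (τ.symm (fdrop m (v+1).val v)).val = p :=
    ⟨_, (τ.symm _).isLt, rfl⟩
  have hv1 := (v+1).isLt
  have hvva := hva' m v
  have hk : ((insP m v τ).symm v).val = p := by
    simp only [insP, expand_symm_apply, hp]
    rw [if_neg hvva]
    rw [show τ.symm (fdrop m (v+1).val v) = ⟨p, hplt⟩ from Fin.ext hp]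
    rw [fskip_mk_eq m (p+1) p hplt p (by omega) (by split <;> omega)]
  apply Equiv.ext; intro j
  have dap : delP m v (insP m v τ) h j = fdrop m (v+1).val ((insP m v τ) (fskip m (p+1) j)) := by
    simp only [delP, squish_apply, hk]
  rw [dap]
  have h1 : ((fskip m (p+1) j)).val ≠ p+1 := fskip_val_ne m (p+1) j
  have iap : (insP m v τ) (fskip m (p+1) j) =
      fskip m (v+1).val (τ (fdrop m (p+1) (fskip m (p+1) j))) := by
    simp only [insP, expand_apply, hp]; rw [if_neg h1]
  rw [iap, fdrop_fskip m (p+1), fdrop_fskip m (v+1).val]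

end Main

noncomputable def NC (n : ℕ) (S : Finset (Fin (n+1))) : ℕ :=
  Nat.card {σ : Equiv.Perm (Fin (n+1)) // ∀ w ∈ S, ReqS n σ w}

lemma NC_step (m : ℕ) (S : Finset (Fin (m+2))) (v : Fin (m+2)) (hv : v ∈ S) (hu : v+1 ∉ S) :
    NC (m+1) S = NC m ((S.erase v).image (fdrop m (v+1).val)) := by
  apply Nat.card_congr
  refine ⟨fun σp => ⟨delP m v σp.1 (σp.2 v hv), ?_⟩, fun τp => ⟨insP m v τp.1, ?_⟩, ?_, ?_⟩
  · intro x hx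
    obtain ⟨w, hwS, rfl⟩ := Finset.mem_image.1 hx
    have hwv : w ≠ v := Finset.ne_of_mem_erase hwS
    have hwS' : w ∈ S := Finset.mem_of_mem_erase hwS
    exact delP_mem m v σp.1 (σp.2 v hv) w hwv (fun h => hu (h ▸ hwS'))
      (fun h => hwv (add_right_cancel h)) (σp.2 w hwS')
  · intro w hwS
    by_cases hwv : w = v
    · subst hwv; exact insP_req m w τp.1
    · refine insP_mem m v τp.1 w hwv (fun h => hu (h ▸ hwS))
        (fun h => hwv (add_right_cancel h)) ?_
      exact τp.2 _ (Finset.mem_image_of_mem _ (Finset.mem_erase.2 ⟨hwv, hwS⟩))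
  · intro σp; exact Subtype.ext (insP_delP m v σp.1 (σp.2 v hv))
  · intro τp; exact Subtype.ext (delP_insP m v τp.1 (insP_req m v τp.1))

open Fin.NatCast Fin.CommRing in
lemma exists_boundary (n : ℕ) (S : Finset (Fin (n+1))) (h1 : S.Nonempty) (h2 : S ≠ Finset.univ) :
    ∃ v ∈ S, v + 1 ∉ S := by
  by_contra hcon
  push_neg at hcon
  obtain ⟨v0, hv0⟩ := h1
  have key : ∀ j : ℕ, v0 + (j : Fin (n+1)) ∈ S := by
    intro j
    induction j with
    | zero => simpa using hv0
    | succ j ih =>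
      have hc : ((j+1 : ℕ) : Fin (n+1)) = (j : Fin (n+1)) + 1 := by push_cast; ring
      rw [hc, ← add_assoc]
      exact hcon _ ih
  apply h2
  apply Finset.eq_univ_of_forall
  intro x
  have hx := key (x - v0).val
  rwa [Fin.cast_val_eq_self, show v0 + (x - v0) = x by ring] at hx

lemma NC_univ (n : ℕ) : NC n (Finset.univ : Finset (Fin (n+1))) = 0 := by
  rw [NC, Nat.card_eq_zero]
  refine Or.inl ⟨?_⟩
  rintro ⟨σ, hσ⟩
  obtain ⟨k, hk, h1, h2⟩ := hσ (σ ⟨n, by omega⟩) (Finset.mem_univ _)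
  have h3 := σ.injective h1
  have h4 : k = n := congrArg Fin.val h3
  omega

lemma NC_empty (n : ℕ) : NC n (∅ : Finset (Fin (n+1))) = Nat.factorial (n+1) := by
  have htriv : ∀ σ : Equiv.Perm (Fin (n+1)), (∀ w ∈ (∅ : Finset (Fin (n+1))), ReqS n σ w) := by
    simp
  rw [NC, Nat.card_congr (Equiv.subtypeUnivEquiv htriv), Nat.card_eq_fintype_card,
    Fintype.card_perm, Fintype.card_fin]

lemma NC_eq : ∀ (c n : ℕ) (S : Finset (Fin (n+1))), S.card = c → S ≠ Finset.univ →
    NC n S = Nat.factorial (n + 1 - c) := by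
  intro c
  induction c with
  | zero =>
    intro n S hc _
    rw [Finset.card_eq_zero.1 hc, NC_empty]
    norm_num
  | succ c ih =>
    intro n S hc hS
    have hne : S.Nonempty := Finset.card_pos.1 (by omega)
    have hlt : S.card < n + 1 := by
      rcases Nat.lt_or_ge S.card (n+1) with h | h
      · exact h
      · exfalso
        apply hS
        apply Finset.eq_univ_of_card
        have hle := Finset.card_le_univ S
        rw [Fintype.card_fin] at hle
        rw [Fintype.card_fin]
        omega
    obtain ⟨m, rfl⟩ : ∃ m, n = m + 1 := ⟨n - 1, by omega⟩
    obtain ⟨v, hv, hu⟩ := exists_boundary (m+1) S hne hS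
    rw [NC_step m S v hv hu]
    have hinj : Set.InjOn (fdrop m (v+1).val) (S.erase v) := by
      intro w hw w' hw' hww
      simp only [Finset.coe_erase, Set.mem_diff, Finset.mem_coe] at hw hw'
      have h1 : w ≠ v+1 := fun h => hu (h ▸ hw.1)
      have h2 : w' ≠ v+1 := fun h => hu (h ▸ hw'.1)
      exact fdrop_inj m (v+1).val (by have := (v+1).isLt; omega) w w'
        (fun hh => h1 (Fin.ext hh)) (fun hh => h2 (Fin.ext hh)) hww
    have hcard : ((S.erase v).image (fdrop m (v+1).val)).card = c := by
      rw [Finset.card_image_of_injOn hinj, Finset.card_erase_of_mem hv, hc]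
      omega
    have hSne : (S.erase v).image (fdrop m (v+1).val) ≠ Finset.univ := by
      intro h
      have hcc := congrArg Finset.card h
      rw [hcard, Finset.card_univ, Fintype.card_fin] at hcc
      omega
    rw [ih m _ hcard hSne]
    congr 1
    omega

lemma avoid_iff (N : ℕ) (σ : Equiv.Perm (Fin (N+1))) :
    (avoidsSucc (N+1) σ ∧ ¬ containsN1 (N+1) σ) ↔ ∀ v, ¬ ReqS N σ v := by
  constructor
  · rintro ⟨hA, hC⟩ v ⟨k, hk, h1, h2⟩
    have hadd := add_one_val N v
    by_cases hv : v.val = N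
    · apply hC
      refine ⟨k, hk, ?_, ?_⟩
      · rw [h1]; omega
      · rw [h2, hadd, if_pos hv]
    · apply hA k hk
      rw [h2, hadd, if_neg hv, h1]
  · intro h
    constructor
    · intro k hk heq
      apply h (σ ⟨k, Nat.lt_of_succ_lt hk⟩)
      refine ⟨k, hk, rfl, ?_⟩
      apply Fin.ext
      have hlt := (σ ⟨k+1, hk⟩).isLt
      rw [add_one_val N (σ ⟨k, Nat.lt_of_succ_lt hk⟩), if_neg (by omega)]
      exact heq
    · rintro ⟨k, hk, h1, h2⟩
      apply h (σ ⟨k, Nat.lt_of_succ_lt hk⟩)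
      refine ⟨k, hk, rfl, ?_⟩
      apply Fin.ext
      rw [add_one_val N (σ ⟨k, Nat.lt_of_succ_lt hk⟩), if_pos (by omega)]
      exact h2

lemma choose_mul_fact (n k : ℕ) (h : k ≤ n) :
    n.choose k * Nat.factorial (n-k) = n.descFactorial (n-k) := by
  have h1 := Nat.factorial_mul_descFactorial (Nat.sub_le n k)
  rw [Nat.sub_sub_self h] at h1
  have h2 := Nat.choose_mul_factorial_mul_factorial h
  apply Nat.eq_of_mul_eq_mul_left (Nat.factorial_pos k)
  calc Nat.factorial k * (n.choose k * Nat.factorial (n-k))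
      = n.choose k * Nat.factorial k * Nat.factorial (n-k) := by ring
    _ = Nat.factorial n := h2
    _ = Nat.factorial k * n.descFactorial (n-k) := h1.symm

lemma DCount_formula (N : ℕ) :
    (DCount (N+1) : ℤ)
      = ∑ k ∈ Finset.range (N+1), (-1:ℤ)^k * ((N+1).descFactorial (N+1-k) : ℤ) := by
  classical
  have h1 : DCount (N+1)
      = (univ.filter fun σ : Equiv.Perm (Fin (N+1)) => ∀ v, ¬ ReqS N σ v).card := by
    rw [DCount, Nat.card_congr (Equiv.subtypeEquivRight (avoid_iff N)),
      Nat.card_eq_fintype_card, Fintype.card_subtype]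
  have per : ∀ σ : Equiv.Perm (Fin (N+1)),
      (if (∀ v, ¬ ReqS N σ v) then (1:ℤ) else 0)
        = ∑ S : Finset (Fin (N+1)), (-1)^S.card * (if (∀ v ∈ S, ReqS N σ v) then 1 else 0) := by
    intro σ
    have hstep : (∑ S : Finset (Fin (N+1)), (-1:ℤ)^S.card * (if (∀ v ∈ S, ReqS N σ v) then 1 else 0))
        = ∑ S : Finset (Fin (N+1)),
            (if S ⊆ univ.filter (fun v => ReqS N σ v) then (-1:ℤ)^S.card else 0) := by
      refine Finset.sum_congr rfl (fun S _ => ?_)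
      have hiff : (∀ v ∈ S, ReqS N σ v) ↔ S ⊆ univ.filter (fun v => ReqS N σ v) := by
        simp [Finset.subset_iff]
      rw [if_congr hiff rfl rfl]
      split <;> ring
    rw [hstep, ← Finset.sum_filter,
      show (univ.filter (· ⊆ univ.filter (fun v => ReqS N σ v)))
          = (univ.filter (fun v => ReqS N σ v)).powerset from by
        ext S; simp [Finset.mem_powerset],
      Finset.sum_powerset_neg_one_pow_card]
    simp [Finset.filter_eq_empty_iff]
  have h2 : ((univ.filter fun σ : Equiv.Perm (Fin (N+1)) => ∀ v, ¬ ReqS N σ v).card : ℤ)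
      = ∑ S : Finset (Fin (N+1)), (-1)^S.card
          * ((univ.filter fun σ : Equiv.Perm (Fin (N+1)) => ∀ v ∈ S, ReqS N σ v).card : ℤ) := by
    rw [← Finset.sum_boole, Finset.sum_congr rfl (fun σ _ => per σ), Finset.sum_comm]
    refine Finset.sum_congr rfl (fun S _ => ?_)
    rw [← Finset.mul_sum, Finset.sum_boole]
  have h3 : ∀ S : Finset (Fin (N+1)),
      ((univ.filter fun σ : Equiv.Perm (Fin (N+1)) => ∀ v ∈ S, ReqS N σ v).card) = NC N S := by
    intro S; rw [NC, Nat.card_eq_fintype_card, Fintype.card_subtype]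
  have h4 : ∀ S : Finset (Fin (N+1)), (NC N S : ℤ)
      = (if S.card = N+1 then 0 else ((Nat.factorial (N+1 - S.card)) : ℤ)) := by
    intro S
    by_cases hS : S.card = N+1
    · rw [if_pos hS]
      have hu : S = univ := Finset.eq_univ_of_card S (by rw [hS, Fintype.card_fin])
      rw [hu, NC_univ]; norm_num
    · rw [if_neg hS]
      have hSu : S ≠ univ := fun h => hS (by rw [h, Finset.card_univ, Fintype.card_fin])
      rw [NC_eq S.card N S rfl hSu]
  have h5 : (∑ S : Finset (Fin (N+1)), (-1:ℤ)^S.card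
        * (if S.card = N+1 then 0 else ((Nat.factorial (N+1 - S.card)) : ℤ)))
      = ∑ j ∈ Finset.range (N+2), ((N+1).choose j)
          • ((-1:ℤ)^j * (if j = N+1 then 0 else ((Nat.factorial (N+1 - j)) : ℤ))) := by
    rw [← Finset.powerset_univ,
      Finset.sum_powerset_apply_card
        (fun j => (-1:ℤ)^j * (if j = N+1 then 0 else ((Nat.factorial (N+1 - j)) : ℤ)))]
    simp [Finset.card_univ]
  rw [h1, h2, Finset.sum_congr rfl (fun S _ => by rw [h3 S, h4 S]), h5,
    Finset.sum_range_succ]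
  rw [if_pos rfl]
  simp only [mul_zero, smul_zero, add_zero]
  refine Finset.sum_congr rfl (fun j hj => ?_)
  rw [Finset.mem_range] at hj
  rw [if_neg (by omega), nsmul_eq_mul, ← choose_mul_fact (N+1) j (by omega)]
  push_cast
  ring

theorem stmt_7 (n : ℕ) (hn : 2 ≤ n) :
    (DCount n : ℤ) = (n : ℤ) * ((DCount (n - 1) : ℤ) + (-1 : ℤ) ^ (n - 1)) := by
  obtain ⟨p, rfl⟩ : ∃ p, n = p + 2 := ⟨n - 2, by omega⟩
  have hred : p + 2 - 1 = p + 1 := rfl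
  rw [hred, DCount_formula (p+1), DCount_formula p, Finset.sum_range_succ]
  have hstep : ∀ k ∈ Finset.range (p+1),
      (-1:ℤ)^k * ((p+2).descFactorial (p+2-k) : ℤ)
        = (p+2) * ((-1)^k * ((p+1).descFactorial (p+1-k) : ℤ)) := by
    intro k hk
    rw [Finset.mem_range] at hk
    rw [show p+2-k = (p+1-k)+1 from by omega,
      show (p+2).descFactorial ((p+1-k)+1) = (p+2) * (p+1).descFactorial (p+1-k) from
        Nat.succ_descFactorial_succ _ _]
    push_cast
    ring
  rw [Finset.sum_congr rfl hstep, ← Finset.mul_sum,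
    show p+2-(p+1) = 1 from by omega, Nat.descFactorial_one]
  push_cast
  ring
end

section
/- For every integer n ≥ 1, n divides D_n. -/
section Aux
variable (n : ℕ) [NeZero n]

/-- Cyclic avoidance condition: `σ(k+1) ≠ σ(k) + 1` in `Fin n` (i.e. mod `n`). -/
def cycAvoid (σ : Equiv.Perm (Fin n)) : Prop :=
  ∀ (k : ℕ) (h : k + 1 < n), σ ⟨k + 1, h⟩ ≠ σ ⟨k, Nat.lt_of_succ_lt h⟩ + 1

lemma cycAvoid_iff (σ : Equiv.Perm (Fin n)) :
    (avoidsSucc n σ ∧ ¬ containsN1 n σ) ↔ cycAvoid n σ := by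
  have hn : 0 < n := Nat.pos_of_ne_zero (NeZero.ne n)
  constructor
  · rintro ⟨ha, hc⟩ k h heq
    have ha' := ha k h
    set a := (σ ⟨k, Nat.lt_of_succ_lt h⟩).val with hadef
    set b := (σ ⟨k + 1, h⟩).val with hbdef
    have hb : b = (a + (1 % n)) % n := by
      rw [hbdef, heq]; simp [Fin.add_def]; rfl
    have halt : a < n := (σ ⟨k, Nat.lt_of_succ_lt h⟩).isLt
    have h1 : 1 % n = 1 := Nat.mod_eq_of_lt (by omega)
    rw [h1] at hb
    by_cases hc2 : a + 1 < n
    · rw [Nat.mod_eq_of_lt hc2] at hb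
      exact ha' hb
    · have : a + 1 = n := by omega
      rw [this, Nat.mod_self] at hb
      exact hc ⟨k, h, by omega, hb⟩
  · intro hcyc
    constructor
    · intro k h heq
      apply hcyc k h
      apply Fin.ext
      have halt : (σ ⟨k, Nat.lt_of_succ_lt h⟩).val < n := (σ _).isLt
      have hblt : (σ ⟨k + 1, h⟩).val < n := (σ _).isLt
      have h1 : 1 % n = 1 := Nat.mod_eq_of_lt (by omega)
      simp only [Fin.add_def, Fin.val_one', h1]
      rw [heq, Nat.mod_eq_of_lt (by omega)]
    · rintro ⟨k, h, h1, h2⟩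
      apply hcyc k h
      apply Fin.ext
      have h1' : 1 % n = 1 := Nat.mod_eq_of_lt (by omega)
      simp only [Fin.add_def, Fin.val_one', h1', h1, h2]
      have : n - 1 + 1 = n := by omega
      rw [this, Nat.mod_self]

/-- Adding a constant to all values preserves the cyclic avoidance condition. -/
lemma cycAvoid_addc (σ : Equiv.Perm (Fin n)) (c : Fin n) :
    cycAvoid n (σ.trans (Equiv.addRight c)) ↔ cycAvoid n σ := by
  unfold cycAvoid
  refine forall_congr' fun k => forall_congr' fun h => ?_
  simp only [Equiv.trans_apply, Equiv.coe_addRight]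
  constructor
  · intro hne heq
    apply hne
    rw [heq, add_right_comm]
  · intro hne heq
    apply hne
    have := add_right_cancel (a := σ ⟨k + 1, h⟩) (b := c)
      (c := σ ⟨k, Nat.lt_of_succ_lt h⟩ + 1)
    rw [add_right_comm] at heq
    exact this heq

end Aux

theorem stmt_9 (n : ℕ) (hn : 1 ≤ n) : n ∣ DCount n := by
  haveI : NeZero n := ⟨by omega⟩
  have hpos : 0 < n := hn
  set T := {σ : Equiv.Perm (Fin n) // cycAvoid n σ ∧ σ ⟨0, hpos⟩ = 0} with hT
  have e : {σ : Equiv.Perm (Fin n) // avoidsSucc n σ ∧ ¬ containsN1 n σ} ≃ Fin n × T := by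
    refine (Equiv.subtypeEquivRight (cycAvoid_iff n)).trans ?_
    refine
      { toFun := fun σs => ⟨σs.1 ⟨0, hpos⟩,
          ⟨σs.1.trans (Equiv.addRight (-(σs.1 ⟨0, hpos⟩))),
           ⟨(cycAvoid_addc n σs.1 _).mpr σs.2, by simp⟩⟩⟩
        invFun := fun p => ⟨p.2.1.trans (Equiv.addRight p.1),
          (cycAvoid_addc n p.2.1 p.1).mpr p.2.2.1⟩
        left_inv := ?_
        right_inv := ?_ }
    · rintro ⟨σ, hσ⟩
      ext x
      simp
    · rintro ⟨c, τ, hτ, h0⟩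
      simp only [Equiv.trans_apply, Equiv.coe_addRight, h0, zero_add]
      refine Prod.ext rfl ?_
      apply Subtype.ext
      ext x
      simp
  rw [DCount, Nat.card_congr e, Nat.card_prod, Nat.card_eq_fintype_card, Fintype.card_fin]
  exact Dvd.intro _ rfl
end

section
/- For every integer n ≥ 2, Der_n = (n−1)·d_{n−1}; that is, the n-th derangement number equals n−1 times the number of arrangements of {1,…,n−1} avoiding all patterns 12, 23, …, (n−2)(n−1). -/
open Finset Equiv

/-- succession at slot `k` -/
def SuccAt (n : ℕ) (σ : Equiv.Perm (Fin n)) (k : ℕ) : Prop :=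
  ∃ h : k + 1 < n, (σ ⟨k + 1, h⟩).val = (σ ⟨k, Nat.lt_of_succ_lt h⟩).val + 1

instance (n : ℕ) (σ : Equiv.Perm (Fin n)) (k : ℕ) : Decidable (SuccAt n σ k) :=
  exists_prop_decidable _

def sSet (n : ℕ) (σ : Equiv.Perm (Fin n)) : Finset ℕ :=
  (Finset.range n).filter (SuccAt n σ)

def AFin (n : ℕ) : Finset (Equiv.Perm (Fin n)) :=
  Finset.univ.filter (fun σ => sSet n σ = ∅)

def EFin (n : ℕ) : Finset (Equiv.Perm (Fin n)) :=
  Finset.univ.filter (fun σ => (sSet n σ).card = 1)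

lemma mem_sSet_iff {n : ℕ} {σ : Equiv.Perm (Fin n)} {k : ℕ} :
    k ∈ sSet n σ ↔ SuccAt n σ k := by
  unfold sSet
  simp only [Finset.mem_filter, Finset.mem_range, and_iff_right_iff_imp]
  rintro ⟨h, -⟩
  omega

lemma avoids_iff {n : ℕ} {σ : Equiv.Perm (Fin n)} :
    avoidsSucc n σ ↔ sSet n σ = ∅ := by
  rw [Finset.eq_empty_iff_forall_notMem]
  constructor
  · intro h k hk
    rw [mem_sSet_iff] at hk
    obtain ⟨hb, he⟩ := hk
    exact h k hb he
  · intro h k hb he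
    exact h k (mem_sSet_iff.2 ⟨hb, he⟩)

lemma dCount_eq (n : ℕ) : dCount n = (AFin n).card := by
  unfold dCount AFin
  rw [Nat.card_congr (Equiv.subtypeEquivRight (fun σ => avoids_iff))]
  rw [Nat.card_eq_fintype_card, Fintype.card_subtype]

lemma mem_AFin_iff {n : ℕ} {σ : Equiv.Perm (Fin n)} : σ ∈ AFin n ↔ sSet n σ = ∅ := by
  simp [AFin]

lemma mem_EFin_iff {n : ℕ} {σ : Equiv.Perm (Fin n)} : σ ∈ EFin n ↔ (sSet n σ).card = 1 := by
  simp [EFin]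

section Ins
variable {N : ℕ}

def insF (p : Fin (N+1)) (τ : Equiv.Perm (Fin N)) (j : Fin (N+1)) : Fin (N+1) :=
  if h : j.val < p.val then (τ ⟨j.val, by have := p.isLt; omega⟩).castSucc
  else if h2 : p.val < j.val then (τ ⟨j.val - 1, by have := j.isLt; omega⟩).castSucc
  else Fin.last N

lemma insF_injective (p : Fin (N+1)) (τ : Equiv.Perm (Fin N)) :
    Function.Injective (insF p τ) := by
  intro j j' hjj
  have hp := p.isLt
  have hj := j.isLt
  have hj' := j'.isLt
  unfold insF at hjj
  rcases lt_trichotomy j.val p.val with h1 | h1 | h1 <;>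
    rcases lt_trichotomy j'.val p.val with h2 | h2 | h2
  · rw [dif_pos h1, dif_pos h2] at hjj
    have := τ.injective (Fin.castSucc_injective _ hjj)
    have := congrArg Fin.val this
    simp only at this
    exact Fin.ext this
  · rw [dif_pos h1, dif_neg (by omega), dif_neg (by omega)] at hjj
    exact absurd hjj (Fin.castSucc_lt_last _).ne
  · rw [dif_pos h1, dif_neg (by omega), dif_pos h2] at hjj
    have := τ.injective (Fin.castSucc_injective _ hjj)
    have := congrArg Fin.val this
    simp only at this
    omega
  · rw [dif_neg (by omega), dif_neg (by omega), dif_pos h2] at hjj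
    exact absurd hjj.symm (Fin.castSucc_lt_last _).ne
  · exact Fin.ext (by omega)
  · rw [dif_neg (by omega), dif_neg (by omega), dif_neg (by omega), dif_pos h2] at hjj
    exact absurd hjj.symm (Fin.castSucc_lt_last _).ne
  · rw [dif_neg (by omega), dif_pos h1, dif_pos h2] at hjj
    have := τ.injective (Fin.castSucc_injective _ hjj)
    have := congrArg Fin.val this
    simp only at this
    omega
  · rw [dif_neg (by omega), dif_pos h1, dif_neg (by omega), dif_neg (by omega)] at hjj
    exact absurd hjj (Fin.castSucc_lt_last _).ne
  · rw [dif_neg (by omega), dif_pos h1, dif_neg (by omega), dif_pos h2] at hjj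
    have := τ.injective (Fin.castSucc_injective _ hjj)
    have := congrArg Fin.val this
    simp only at this
    exact Fin.ext (by omega)

noncomputable def ins (p : Fin (N+1)) (τ : Equiv.Perm (Fin N)) : Equiv.Perm (Fin (N+1)) :=
  Equiv.ofBijective (insF p τ) ((Finite.injective_iff_bijective).1 (insF_injective p τ))

lemma ins_apply (p : Fin (N+1)) (τ : Equiv.Perm (Fin N)) (j : Fin (N+1)) :
    ins p τ j = insF p τ j := rfl

lemma ins_val_lt (p : Fin (N+1)) (τ : Equiv.Perm (Fin N)) (k : ℕ)
    (h1 : k < p.val) (h2 : k < N+1) (h3 : k < N) :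
    ((ins p τ) ⟨k, h2⟩).val = (τ ⟨k, h3⟩).val := by
  rw [ins_apply]
  unfold insF
  rw [dif_pos h1]
  rfl

lemma ins_val_self (p : Fin (N+1)) (τ : Equiv.Perm (Fin N)) :
    ((ins p τ) p).val = N := by
  rw [ins_apply]
  unfold insF
  rw [dif_neg (by omega), dif_neg (by omega)]
  rfl

lemma ins_val_gt (p : Fin (N+1)) (τ : Equiv.Perm (Fin N)) (k : ℕ)
    (h1 : p.val ≤ k) (h2 : k + 1 < N+1) (h3 : k < N) :
    ((ins p τ) ⟨k + 1, h2⟩).val = (τ ⟨k, h3⟩).val := by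
  rw [ins_apply]
  unfold insF
  have e1 : ¬ ((⟨k + 1, h2⟩ : Fin (N+1)).val < p.val) := by simp only [Fin.val_mk]; omega
  have e2 : p.val < (⟨k + 1, h2⟩ : Fin (N+1)).val := by simp only [Fin.val_mk]; omega
  rw [dif_neg e1, dif_pos e2]
  rfl

lemma ins_pair_inj {p p' : Fin (N+1)} {τ τ' : Equiv.Perm (Fin N)}
    (h : ins p τ = ins p' τ') : p = p' ∧ τ = τ' := by
  have hpp : p = p' := by
    have h1 : ((ins p τ) p).val = N := ins_val_self p τ
    have h2 : ((ins p τ) p').val = N := by rw [h]; exact ins_val_self p' τ'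
    have : (ins p τ) p = (ins p τ) p' := Fin.ext (by rw [h1, h2])
    exact (ins p τ).injective this
  subst hpp
  refine ⟨rfl, ?_⟩
  ext k
  rcases lt_or_ge k.val p.val with hk | hk
  · have hb : k.val < N + 1 := by omega
    have e1 := ins_val_lt p τ k.val hk hb k.isLt
    have e2 := ins_val_lt p τ' k.val hk hb k.isLt
    rw [h] at e1
    rw [e2] at e1
    exact e1.symm
  · have hb : k.val + 1 < N + 1 := by omega
    have e1 := ins_val_gt p τ k.val hk hb k.isLt
    have e2 := ins_val_gt p τ' k.val hk hb k.isLt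
    rw [h] at e1
    rw [e2] at e1
    exact e1.symm

end Ins


section Trans
variable {N : ℕ} (p : Fin (N+1)) (τ : Equiv.Perm (Fin N))

lemma succAt_ins_lt {k : ℕ} (hk : k + 1 < p.val) :
    SuccAt (N+1) (ins p τ) k ↔ SuccAt N τ k := by
  have hp := p.isLt
  have hkN : k + 1 < N := by omega
  constructor
  · rintro ⟨h, hv⟩
    have e1 : ((ins p τ) ⟨k+1, h⟩).val = (τ ⟨k+1, hkN⟩).val :=
      ins_val_lt p τ (k+1) hk h hkN
    have e2 : ((ins p τ) ⟨k, Nat.lt_of_succ_lt h⟩).val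
        = (τ ⟨k, Nat.lt_of_succ_lt hkN⟩).val :=
      ins_val_lt p τ k (by omega) (Nat.lt_of_succ_lt h) (Nat.lt_of_succ_lt hkN)
    exact ⟨hkN, by omega⟩
  · rintro ⟨h, hv⟩
    have hb : k + 1 < N + 1 := by omega
    refine ⟨hb, ?_⟩
    have e1 : ((ins p τ) ⟨k+1, hb⟩).val = (τ ⟨k+1, h⟩).val :=
      ins_val_lt p τ (k+1) hk hb h
    have e2 : ((ins p τ) ⟨k, Nat.lt_of_succ_lt hb⟩).val
        = (τ ⟨k, Nat.lt_of_succ_lt h⟩).val :=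
      ins_val_lt p τ k (by omega) (Nat.lt_of_succ_lt hb) (Nat.lt_of_succ_lt h)
    omega

lemma succAt_ins_eq {k : ℕ} (hk : k + 1 = p.val) (hkN : k < N) :
    SuccAt (N+1) (ins p τ) k ↔ (τ ⟨k, hkN⟩).val + 1 = N := by
  have hp := p.isLt
  constructor
  · rintro ⟨h, hv⟩
    have hp1 : (⟨k+1, h⟩ : Fin (N+1)) = p := Fin.ext hk
    have e1 : ((ins p τ) ⟨k+1, h⟩).val = N := by rw [hp1]; exact ins_val_self p τ
    have e2 : ((ins p τ) ⟨k, Nat.lt_of_succ_lt h⟩).val = (τ ⟨k, hkN⟩).val :=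
      ins_val_lt p τ k (by omega) (Nat.lt_of_succ_lt h) hkN
    omega
  · intro hv
    have hb : k + 1 < N + 1 := by omega
    refine ⟨hb, ?_⟩
    have hp1 : (⟨k+1, hb⟩ : Fin (N+1)) = p := Fin.ext hk
    have e1 : ((ins p τ) ⟨k+1, hb⟩).val = N := by rw [hp1]; exact ins_val_self p τ
    have e2 : ((ins p τ) ⟨k, Nat.lt_of_succ_lt hb⟩).val = (τ ⟨k, hkN⟩).val :=
      ins_val_lt p τ k (by omega) (Nat.lt_of_succ_lt hb) hkN
    omega

lemma succAt_ins_self : ¬ SuccAt (N+1) (ins p τ) p.val := by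
  rintro ⟨h, hv⟩
  have h3 : p.val < N := by omega
  have hp1 : (⟨p.val, Nat.lt_of_succ_lt h⟩ : Fin (N+1)) = p := Fin.ext rfl
  have e2 : ((ins p τ) ⟨p.val, Nat.lt_of_succ_lt h⟩).val = N := by
    rw [hp1]; exact ins_val_self p τ
  have e1 : ((ins p τ) ⟨p.val + 1, h⟩).val = (τ ⟨p.val, h3⟩).val :=
    ins_val_gt p τ p.val (le_refl _) h h3
  have hlt := (τ ⟨p.val, h3⟩).isLt
  omega

lemma succAt_ins_gt {k : ℕ} (hk : p.val ≤ k) :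
    SuccAt (N+1) (ins p τ) (k+1) ↔ SuccAt N τ k := by
  constructor
  · rintro ⟨h, hv⟩
    have hkN : k + 1 < N := by omega
    have e1 : ((ins p τ) ⟨k+1+1, h⟩).val = (τ ⟨k+1, hkN⟩).val :=
      ins_val_gt p τ (k+1) (by omega) h hkN
    have e2 : ((ins p τ) ⟨k+1, Nat.lt_of_succ_lt h⟩).val
        = (τ ⟨k, Nat.lt_of_succ_lt hkN⟩).val :=
      ins_val_gt p τ k hk (Nat.lt_of_succ_lt h) (Nat.lt_of_succ_lt hkN)
    exact ⟨hkN, by omega⟩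
  · rintro ⟨h, hv⟩
    have hb : k + 1 + 1 < N + 1 := by omega
    refine ⟨hb, ?_⟩
    have e1 : ((ins p τ) ⟨k+1+1, hb⟩).val = (τ ⟨k+1, h⟩).val :=
      ins_val_gt p τ (k+1) (by omega) hb h
    have e2 : ((ins p τ) ⟨k+1, Nat.lt_of_succ_lt hb⟩).val
        = (τ ⟨k, Nat.lt_of_succ_lt h⟩).val :=
      ins_val_gt p τ k hk (Nat.lt_of_succ_lt hb) (Nat.lt_of_succ_lt h)
    omega

/-- Main characterization: when is an insertion succession-free. -/
lemma ins_mem_A_iff :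
    sSet (N+1) (ins p τ) = ∅ ↔
      ((∀ s ∈ sSet N τ, s + 1 = p.val) ∧
       ∀ (_ : p.val ≠ 0) (hb : p.val - 1 < N), (τ ⟨p.val - 1, hb⟩).val + 1 ≠ N) := by
  have hp := p.isLt
  rw [Finset.eq_empty_iff_forall_notMem]
  constructor
  · intro h
    constructor
    · intro s hs
      rw [mem_sSet_iff] at hs
      have hsb : s + 1 < N := hs.1
      by_contra hne
      rcases lt_trichotomy (s+1) p.val with h1 | h1 | h1
      · exact h s (mem_sSet_iff.2 ((succAt_ins_lt p τ h1).2 hs))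
      · exact hne h1
      · exact h (s+1) (mem_sSet_iff.2 ((succAt_ins_gt p τ (by omega)).2 hs))
    · intro hp0 hb hv
      apply h (p.val - 1)
      rw [mem_sSet_iff]
      have hk : (p.val - 1) + 1 = p.val := by omega
      rw [succAt_ins_eq p τ hk hb]
      exact hv
  · rintro ⟨h1, h2⟩ k hk
    rw [mem_sSet_iff] at hk
    rcases lt_trichotomy (k+1) p.val with hc | hc | hc
    · have := (succAt_ins_lt p τ hc).1 hk
      have hs := h1 k (mem_sSet_iff.2 this)
      omega
    · have hkN : k < N := by omega
      have := (succAt_ins_eq p τ hc hkN).1 hk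
      refine h2 (by omega) (by omega : p.val - 1 < N) ?_
      have i1 : (⟨p.val - 1, (by omega : p.val - 1 < N)⟩ : Fin N) = ⟨k, hkN⟩ :=
        Fin.ext (show p.val - 1 = k by omega)
      rw [i1]
      exact this
    · rcases Nat.eq_or_lt_of_le (by omega : p.val ≤ k) with he | hgt
      · exact succAt_ins_self p τ (he ▸ hk)
      · have hke : k - 1 + 1 = k := by omega
        rw [← hke] at hk
        have := (succAt_ins_gt p τ (by omega)).1 hk
        have hs := h1 (k-1) (mem_sSet_iff.2 this)
        omega

end Trans

section Count
variable {N : ℕ}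

lemma count_A (τ : Equiv.Perm (Fin N)) (hN : 1 ≤ N) (hτ : sSet N τ = ∅) :
    (Finset.univ.filter (fun p : Fin (N+1) => sSet (N+1) (ins p τ) = ∅)).card = N := by
  have htb : N - 1 < N := by omega
  set t : Fin N := τ.symm ⟨N-1, htb⟩ with htdef
  have hb : t.val + 1 < N + 1 := by have := t.isLt; omega
  set b : Fin (N+1) := ⟨t.val + 1, hb⟩ with hbdef
  have key : ∀ p : Fin (N+1), (sSet (N+1) (ins p τ) = ∅) ↔ p ≠ b := by
    intro p
    rw [ins_mem_A_iff]
    constructor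
    · rintro ⟨-, h2⟩ rfl
      have hp0 : b.val ≠ 0 := Nat.succ_ne_zero _
      have hb2 : b.val - 1 < N := by
        show t.val + 1 - 1 < N
        have := t.isLt
        omega
      apply h2 hp0 hb2
      have i1 : (⟨b.val - 1, hb2⟩ : Fin N) = t := Fin.ext (show t.val + 1 - 1 = t.val from rfl)
      rw [i1, htdef, Equiv.apply_symm_apply]
      show N - 1 + 1 = N
      omega
    · intro hpb
      refine ⟨by simp [hτ], ?_⟩
      intro hp0 hb2 hval
      have i2 : τ ⟨p.val - 1, hb2⟩ = ⟨N-1, htb⟩ :=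
        Fin.ext (show (τ ⟨p.val - 1, hb2⟩).val = N - 1 by omega)
      have i3 : (⟨p.val - 1, hb2⟩ : Fin N) = t := by
        rw [htdef, Equiv.eq_symm_apply]
        exact i2
      have i3v : p.val - 1 = t.val := congrArg Fin.val i3
      exact hpb (Fin.ext (show p.val = t.val + 1 by omega))
  rw [Finset.filter_congr (fun p _ => by rw [key p])]
  rw [Finset.filter_ne' Finset.univ b]
  rw [Finset.card_erase_of_mem (Finset.mem_univ b), Finset.card_univ, Fintype.card_fin]
  omega

lemma count_E (τ : Equiv.Perm (Fin N)) (hτ : (sSet N τ).card = 1) :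
    (Finset.univ.filter (fun p : Fin (N+1) => sSet (N+1) (ins p τ) = ∅)).card = 1 := by
  obtain ⟨q, hq⟩ := Finset.card_eq_one.1 hτ
  have hqm : q ∈ sSet N τ := hq ▸ Finset.mem_singleton_self q
  rw [mem_sSet_iff] at hqm
  obtain ⟨hqb, hqv⟩ := hqm
  have hc : q + 1 < N + 1 := by omega
  set c : Fin (N+1) := ⟨q+1, hc⟩ with hcdef
  have key : ∀ p : Fin (N+1), (sSet (N+1) (ins p τ) = ∅) ↔ p = c := by
    intro p
    rw [ins_mem_A_iff]
    constructor
    · rintro ⟨h1, -⟩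
      have := h1 q (by rw [hq]; exact Finset.mem_singleton_self q)
      exact Fin.ext (by rw [hcdef]; simp only [Fin.val_mk]; omega)
    · rintro rfl
      constructor
      · intro s hs
        rw [hq, Finset.mem_singleton] at hs
        subst hs
        rfl
      · intro hp0 hb2 hval
        have hval' : (τ ⟨q, Nat.lt_of_succ_lt hqb⟩).val + 1 = N := hval
        have := (τ ⟨q+1, hqb⟩).isLt
        omega
  rw [Finset.filter_congr (fun p _ => by rw [key p])]
  rw [Finset.filter_eq' Finset.univ c, if_pos (Finset.mem_univ c)]
  exact Finset.card_singleton c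

lemma count_rest (τ : Equiv.Perm (Fin N)) (hτ : 2 ≤ (sSet N τ).card) :
    (Finset.univ.filter (fun p : Fin (N+1) => sSet (N+1) (ins p τ) = ∅)).card = 0 := by
  rw [Finset.card_eq_zero, Finset.filter_eq_empty_iff]
  intro p _
  rw [ins_mem_A_iff]
  rintro ⟨h1, -⟩
  have hsub : sSet N τ ⊆ {p.val - 1} := by
    intro s hs
    have := h1 s hs
    rw [Finset.mem_singleton]
    omega
  have := Finset.card_le_card hsub
  rw [Finset.card_singleton] at this
  omega

end Count

lemma ins_pair_surjective (N : ℕ) :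
    Function.Surjective
      (fun pt : Fin (N+1) × Equiv.Perm (Fin N) => ins pt.1 pt.2) := by
  have hinj : Function.Injective
      (fun pt : Fin (N+1) × Equiv.Perm (Fin N) => ins pt.1 pt.2) := by
    rintro ⟨p, τ⟩ ⟨p', τ'⟩ h
    obtain ⟨h1, h2⟩ := ins_pair_inj h
    exact Prod.ext h1 h2
  have hcard : Fintype.card (Fin (N+1) × Equiv.Perm (Fin N))
      = Fintype.card (Equiv.Perm (Fin (N+1))) := by
    rw [Fintype.card_prod, Fintype.card_perm, Fintype.card_perm,
      Fintype.card_fin, Fintype.card_fin, Nat.factorial_succ]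
  exact ((Fintype.bijective_iff_injective_and_card _).2 ⟨hinj, hcard⟩).2

lemma R1 (N : ℕ) (hN : 1 ≤ N) :
    (AFin (N+1)).card = N * (AFin N).card + (EFin N).card := by
  classical
  set S : Finset (Fin (N+1) × Equiv.Perm (Fin N)) :=
    Finset.univ.filter (fun pt => sSet (N+1) (ins pt.1 pt.2) = ∅) with hSdef
  have stepA : S.card = (AFin (N+1)).card := by
    apply Finset.card_bij (fun pt _ => ins pt.1 pt.2)
    · intro pt hpt
      rw [hSdef, Finset.mem_filter] at hpt
      rw [mem_AFin_iff]
      exact hpt.2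
    · intro pt hpt pt' hpt' h
      obtain ⟨h1, h2⟩ := ins_pair_inj h
      exact Prod.ext h1 h2
    · intro σ hσ
      obtain ⟨pt, hpt⟩ := ins_pair_surjective N σ
      refine ⟨pt, ?_, hpt⟩
      rw [hSdef, Finset.mem_filter]
      refine ⟨Finset.mem_univ _, ?_⟩
      rw [show ins pt.1 pt.2 = σ from hpt]
      exact mem_AFin_iff.1 hσ
  have stepB : S.card = ∑ τ : Equiv.Perm (Fin N),
      (Finset.univ.filter (fun p : Fin (N+1) => sSet (N+1) (ins p τ) = ∅)).card := by
    rw [Finset.card_eq_sum_card_fiberwise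
      (f := Prod.snd) (t := Finset.univ) (fun pt _ => Finset.mem_univ _)]
    apply Finset.sum_congr rfl
    intro τ _
    apply Finset.card_bij (fun pt _ => pt.1)
    · intro pt hpt
      rw [Finset.mem_filter] at hpt ⊢
      obtain ⟨hpt1, hpt2⟩ := hpt
      rw [hSdef, Finset.mem_filter] at hpt1
      refine ⟨Finset.mem_univ _, ?_⟩
      rw [← hpt2]
      exact hpt1.2
    · intro pt hpt pt' hpt' h
      rw [Finset.mem_filter] at hpt hpt'
      have : pt.2 = pt'.2 := by rw [hpt.2, hpt'.2]
      exact Prod.ext h this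
    · intro p hp
      rw [Finset.mem_filter] at hp
      refine ⟨(p, τ), ?_, rfl⟩
      rw [Finset.mem_filter, hSdef, Finset.mem_filter]
      exact ⟨⟨Finset.mem_univ _, hp.2⟩, rfl⟩
  have stepC : ∀ τ : Equiv.Perm (Fin N),
      (Finset.univ.filter (fun p : Fin (N+1) => sSet (N+1) (ins p τ) = ∅)).card
      = N * (if sSet N τ = ∅ then 1 else 0) + (if (sSet N τ).card = 1 then 1 else 0) := by
    intro τ
    by_cases h0 : sSet N τ = ∅
    · rw [if_pos h0, if_neg (by rw [h0]; simp), count_A τ hN h0]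
      ring
    · by_cases h1c : (sSet N τ).card = 1
      · rw [if_neg h0, if_pos h1c, count_E τ h1c]
        ring
      · have h2c : 2 ≤ (sSet N τ).card := by
          have : (sSet N τ).card ≠ 0 := by
            rw [Ne, Finset.card_eq_zero]
            exact h0
          omega
        rw [if_neg h0, if_neg h1c, count_rest τ h2c]
        ring
  rw [← stepA, stepB, Finset.sum_congr rfl (fun τ _ => stepC τ),
    Finset.sum_add_distrib, ← Finset.mul_sum, Finset.sum_boole, Finset.sum_boole]
  simp only [Nat.cast_id]
  rfl

section Exp
variable {K : ℕ}

def upF (i : Fin K) (v : Fin K) : Fin (K+1) :=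
  if v.val ≤ i.val then v.castSucc else v.succ

lemma upF_val_le {i v : Fin K} (h : v.val ≤ i.val) : (upF i v).val = v.val := by
  unfold upF; rw [if_pos h]; rfl

lemma upF_val_gt {i v : Fin K} (h : i.val < v.val) : (upF i v).val = v.val + 1 := by
  unfold upF; rw [if_neg (by omega)]; rfl

lemma upF_val_ne (i v : Fin K) : (upF i v).val ≠ i.val + 1 := by
  rcases le_or_gt v.val i.val with h | h
  · rw [upF_val_le h]; omega
  · rw [upF_val_gt h]; omega

lemma upF_inj (i : Fin K) : Function.Injective (upF i) := by
  intro a b h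
  have hv := congrArg Fin.val h
  apply Fin.ext
  rcases le_or_gt a.val i.val with ha | ha <;> rcases le_or_gt b.val i.val with hb | hb
  · rw [upF_val_le ha, upF_val_le hb] at hv; omega
  · rw [upF_val_le ha, upF_val_gt hb] at hv; omega
  · rw [upF_val_gt ha, upF_val_le hb] at hv; omega
  · rw [upF_val_gt ha, upF_val_gt hb] at hv; omega

lemma upF_succ_iff (i a b : Fin K) :
    (upF i b).val = (upF i a).val + 1 ↔ (b.val = a.val + 1 ∧ a.val ≠ i.val) := by
  rcases le_or_gt a.val i.val with ha | ha <;> rcases le_or_gt b.val i.val with hb | hb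
  · rw [upF_val_le ha, upF_val_le hb]; omega
  · rw [upF_val_le ha, upF_val_gt hb]; omega
  · rw [upF_val_gt ha, upF_val_le hb]; omega
  · rw [upF_val_gt ha, upF_val_gt hb]; omega

def expF (i : Fin K) (ρ : Equiv.Perm (Fin K)) (j : Fin (K+1)) : Fin (K+1) :=
  if h : j.val ≤ (ρ.symm i).val then
    upF i (ρ ⟨j.val, lt_of_le_of_lt h (ρ.symm i).isLt⟩)
  else if h2 : j.val = (ρ.symm i).val + 1 then
    ⟨i.val + 1, by have := i.isLt; omega⟩
  else
    upF i (ρ ⟨j.val - 1, by have := j.isLt; have := (ρ.symm i).isLt; omega⟩)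

lemma expF_injective (i : Fin K) (ρ : Equiv.Perm (Fin K)) :
    Function.Injective (expF i ρ) := by
  intro j j' h
  have hsK := (ρ.symm i).isLt
  have hj := j.isLt
  have hj' := j'.isLt
  unfold expF at h
  apply Fin.ext
  rcases le_or_gt j.val (ρ.symm i).val with h1 | h1 <;>
    rcases le_or_gt j'.val (ρ.symm i).val with h2 | h2
  · rw [dif_pos h1, dif_pos h2] at h
    have := congrArg Fin.val (ρ.injective (upF_inj i h))
    simp only [Fin.val_mk] at this
    omega
  · rw [dif_pos h1] at h
    by_cases h3 : j'.val = (ρ.symm i).val + 1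
    · rw [dif_neg (by omega), dif_pos h3] at h
      have := congrArg Fin.val h
      exact absurd this (upF_val_ne i _)
    · rw [dif_neg (by omega), dif_neg h3] at h
      have := congrArg Fin.val (ρ.injective (upF_inj i h))
      simp only [Fin.val_mk] at this
      omega
  · rw [dif_pos h2] at h
    by_cases h3 : j.val = (ρ.symm i).val + 1
    · rw [dif_neg (by omega), dif_pos h3] at h
      have := congrArg Fin.val h.symm
      exact absurd this (upF_val_ne i _)
    · rw [dif_neg (by omega), dif_neg h3] at h
      have := congrArg Fin.val (ρ.injective (upF_inj i h))
      simp only [Fin.val_mk] at this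
      omega
  · by_cases h3 : j.val = (ρ.symm i).val + 1 <;>
      by_cases h4 : j'.val = (ρ.symm i).val + 1
    · omega
    · rw [dif_neg (show ¬ j.val ≤ (ρ.symm i).val by omega), dif_pos h3,
          dif_neg (show ¬ j'.val ≤ (ρ.symm i).val by omega), dif_neg h4] at h
      have := congrArg Fin.val h.symm
      exact absurd this (upF_val_ne i _)
    · rw [dif_neg (show ¬ j.val ≤ (ρ.symm i).val by omega), dif_neg h3,
          dif_neg (show ¬ j'.val ≤ (ρ.symm i).val by omega), dif_pos h4] at h
      have := congrArg Fin.val h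
      exact absurd this (upF_val_ne i _)
    · rw [dif_neg (show ¬ j.val ≤ (ρ.symm i).val by omega), dif_neg h3,
          dif_neg (show ¬ j'.val ≤ (ρ.symm i).val by omega), dif_neg h4] at h
      have := congrArg Fin.val (ρ.injective (upF_inj i h))
      simp only [Fin.val_mk] at this
      omega

noncomputable def expP (i : Fin K) (ρ : Equiv.Perm (Fin K)) : Equiv.Perm (Fin (K+1)) :=
  Equiv.ofBijective (expF i ρ) ((Finite.injective_iff_bijective).1 (expF_injective i ρ))

lemma expP_apply (i : Fin K) (ρ : Equiv.Perm (Fin K)) (j : Fin (K+1)) :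
    expP i ρ j = expF i ρ j := rfl

lemma expP_apply_le (i : Fin K) (ρ : Equiv.Perm (Fin K)) (k : ℕ)
    (h1 : k ≤ (ρ.symm i).val) (h2 : k < K+1) (h3 : k < K) :
    (expP i ρ) ⟨k, h2⟩ = upF i (ρ ⟨k, h3⟩) := by
  rw [expP_apply]
  unfold expF
  rw [dif_pos (show (⟨k, h2⟩ : Fin (K+1)).val ≤ (ρ.symm i).val from h1)]

lemma expP_apply_mid (i : Fin K) (ρ : Equiv.Perm (Fin K))
    (h2 : (ρ.symm i).val + 1 < K + 1) :
    ((expP i ρ) ⟨(ρ.symm i).val + 1, h2⟩).val = i.val + 1 := by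
  rw [expP_apply]
  unfold expF
  rw [dif_neg (show ¬ ((⟨(ρ.symm i).val + 1, h2⟩ : Fin (K+1)).val ≤ (ρ.symm i).val) by
        simp only [Fin.val_mk]; omega),
      dif_pos (show (⟨(ρ.symm i).val + 1, h2⟩ : Fin (K+1)).val = (ρ.symm i).val + 1 from rfl)]

lemma expP_apply_gt (i : Fin K) (ρ : Equiv.Perm (Fin K)) (k : ℕ)
    (h1 : (ρ.symm i).val < k) (h2 : k + 1 < K+1) (h3 : k < K) :
    (expP i ρ) ⟨k + 1, h2⟩ = upF i (ρ ⟨k, h3⟩) := by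
  rw [expP_apply]
  unfold expF
  rw [dif_neg (show ¬ ((⟨k + 1, h2⟩ : Fin (K+1)).val ≤ (ρ.symm i).val) by
        simp only [Fin.val_mk]; omega),
      dif_neg (show ¬ ((⟨k + 1, h2⟩ : Fin (K+1)).val = (ρ.symm i).val + 1) by
        simp only [Fin.val_mk]; omega)]
  rfl

end Exp

section ExpTrans
variable {K : ℕ}

def downF (i : Fin K) (v : Fin (K+1)) : Fin K :=
  if h : v.val ≤ i.val then ⟨v.val, by have := i.isLt; omega⟩
  else ⟨v.val - 1, by have := v.isLt; have := i.isLt; omega⟩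

lemma downF_val_le {i : Fin K} {v : Fin (K+1)} (h : v.val ≤ i.val) :
    (downF i v).val = v.val := by
  unfold downF; rw [dif_pos h]

lemma downF_val_gt {i : Fin K} {v : Fin (K+1)} (h : i.val < v.val) :
    (downF i v).val = v.val - 1 := by
  unfold downF; rw [dif_neg (show ¬ v.val ≤ i.val by omega)]

lemma up_down {i : Fin K} (v : Fin (K+1)) (hv : v.val ≠ i.val + 1) :
    upF i (downF i v) = v := by
  apply Fin.ext
  rcases le_or_gt v.val i.val with h | h
  · have h1 : (downF i v).val = v.val := downF_val_le h
    rw [upF_val_le (by omega)]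
    omega
  · have h1 : (downF i v).val = v.val - 1 := downF_val_gt h
    rw [upF_val_gt (show i.val < (downF i v).val by omega)]
    omega

lemma downF_succ_iff {i : Fin K} (v w : Fin (K+1))
    (hv : v.val ≠ i.val + 1) (hw : w.val ≠ i.val + 1) :
    (downF i w).val = (downF i v).val + 1 ↔
      (w.val = v.val + 1 ∨ (v.val = i.val ∧ w.val = i.val + 2)) := by
  have hvK := v.isLt
  have hwK := w.isLt
  rcases le_or_gt v.val i.val with h1 | h1 <;> rcases le_or_gt w.val i.val with h2 | h2
  · rw [downF_val_le h1, downF_val_le h2]; omega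
  · rw [downF_val_le h1, downF_val_gt h2]; omega
  · rw [downF_val_gt h1, downF_val_le h2]; omega
  · rw [downF_val_gt h1, downF_val_gt h2]; omega

lemma succAt_expP_iff (i : Fin K) (ρ : Equiv.Perm (Fin K)) (hρ : sSet K ρ = ∅) (k : ℕ) :
    SuccAt (K+1) (expP i ρ) k ↔ k = (ρ.symm i).val := by
  have hsK := (ρ.symm i).isLt
  have hrs : ∀ (pf : (ρ.symm i).val < K), ρ ⟨(ρ.symm i).val, pf⟩ = i := by
    intro pf
    rw [show (⟨(ρ.symm i).val, pf⟩ : Fin K) = ρ.symm i from rfl]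
    exact Equiv.apply_symm_apply ρ i
  have hnot : ∀ m, ¬ SuccAt K ρ m := by
    intro m hm
    have := mem_sSet_iff.2 hm
    rw [hρ] at this
    exact absurd this (Finset.notMem_empty _)
  constructor
  · rintro ⟨h, hv⟩
    by_contra hne
    rcases lt_trichotomy k (ρ.symm i).val with hc | hc | hc
    · -- k+1 ≤ s
      have hb1 : k + 1 < K := by omega
      have e1 : (expP i ρ) ⟨k+1, h⟩ = upF i (ρ ⟨k+1, hb1⟩) :=
        expP_apply_le i ρ (k+1) (by omega) h hb1
      have e2 : (expP i ρ) ⟨k, Nat.lt_of_succ_lt h⟩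
          = upF i (ρ ⟨k, Nat.lt_of_succ_lt hb1⟩) :=
        expP_apply_le i ρ k (by omega) (Nat.lt_of_succ_lt h) (Nat.lt_of_succ_lt hb1)
      rw [e1, e2] at hv
      have := (upF_succ_iff i (ρ ⟨k, Nat.lt_of_succ_lt hb1⟩) (ρ ⟨k+1, hb1⟩)).1 hv
      exact hnot k ⟨hb1, this.1⟩
    · exact hne hc
    · rcases Nat.eq_or_lt_of_le (by omega : (ρ.symm i).val + 1 ≤ k) with he | hgt
      · -- k = s+1
        have hb1 : (ρ.symm i).val + 1 < K := by omega
        obtain rfl : k = (ρ.symm i).val + 1 := he.symm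
        have e1 : (expP i ρ) ⟨(ρ.symm i).val + 1 + 1, h⟩
            = upF i (ρ ⟨(ρ.symm i).val + 1, hb1⟩) :=
          expP_apply_gt i ρ ((ρ.symm i).val + 1) (by omega) h hb1
        have e2 : ((expP i ρ) ⟨(ρ.symm i).val + 1, Nat.lt_of_succ_lt h⟩).val = i.val + 1 :=
          expP_apply_mid i ρ (Nat.lt_of_succ_lt h)
        rw [e1] at hv
        rw [e2] at hv
        have hval1 : (ρ ⟨(ρ.symm i).val + 1, hb1⟩).val = i.val + 1 := by
          rcases le_or_gt (ρ ⟨(ρ.symm i).val + 1, hb1⟩).val i.val with h5 | h5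
          · rw [upF_val_le h5] at hv; omega
          · rw [upF_val_gt h5] at hv; omega
        have hval2 : (ρ ⟨(ρ.symm i).val, Nat.lt_of_succ_lt hb1⟩).val = i.val :=
          congrArg Fin.val (hrs (Nat.lt_of_succ_lt hb1))
        exact hnot (ρ.symm i).val ⟨hb1, by omega⟩
      · -- k ≥ s+2
        obtain ⟨m, rfl⟩ : ∃ m, k = m + 1 := ⟨k - 1, by omega⟩
        have hbm : m + 1 < K := by omega
        have e1 : (expP i ρ) ⟨m + 1 + 1, h⟩ = upF i (ρ ⟨m + 1, hbm⟩) :=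
          expP_apply_gt i ρ (m+1) (by omega) h hbm
        have e2 : (expP i ρ) ⟨m + 1, Nat.lt_of_succ_lt h⟩
            = upF i (ρ ⟨m, Nat.lt_of_succ_lt hbm⟩) :=
          expP_apply_gt i ρ m (by omega) (Nat.lt_of_succ_lt h) (Nat.lt_of_succ_lt hbm)
        rw [e1, e2] at hv
        have := (upF_succ_iff i (ρ ⟨m, Nat.lt_of_succ_lt hbm⟩) (ρ ⟨m+1, hbm⟩)).1 hv
        exact hnot m ⟨hbm, this.1⟩
  · rintro rfl
    have hb : (ρ.symm i).val + 1 < K + 1 := by omega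
    refine ⟨hb, ?_⟩
    have e1 : ((expP i ρ) ⟨(ρ.symm i).val + 1, hb⟩).val = i.val + 1 :=
      expP_apply_mid i ρ hb
    have e2 : (expP i ρ) ⟨(ρ.symm i).val, Nat.lt_of_succ_lt hb⟩
        = upF i (ρ ⟨(ρ.symm i).val, hsK⟩) :=
      expP_apply_le i ρ (ρ.symm i).val (le_refl _) (Nat.lt_of_succ_lt hb) hsK
    have e3 : (ρ ⟨(ρ.symm i).val, hsK⟩) = i := hrs hsK
    rw [e1, e2, e3, upF_val_le (le_refl i.val)]

lemma sSet_expP (i : Fin K) (ρ : Equiv.Perm (Fin K)) (hρ : sSet K ρ = ∅) :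
    sSet (K+1) (expP i ρ) = {(ρ.symm i).val} := by
  ext k
  rw [mem_sSet_iff, succAt_expP_iff i ρ hρ, Finset.mem_singleton]

end ExpTrans

lemma downF_inj' {K : ℕ} {i : Fin K} {v w : Fin (K+1)}
    (hv : v.val ≠ i.val + 1) (hw : w.val ≠ i.val + 1) (h : downF i v = downF i w) :
    v = w := by
  rw [← up_down v hv, ← up_down w hw, h]

lemma expP_surj_onto_E {K : ℕ} (τ : Equiv.Perm (Fin (K+1)))
    (hτ : (sSet (K+1) τ).card = 1) :
    ∃ (i : Fin K) (ρ : Equiv.Perm (Fin K)), sSet K ρ = ∅ ∧ expP i ρ = τ := by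
  classical
  obtain ⟨q, hq⟩ := Finset.card_eq_one.1 hτ
  have hqm : SuccAt (K+1) τ q := mem_sSet_iff.1 (by rw [hq]; exact Finset.mem_singleton_self q)
  obtain ⟨hqb, hqv⟩ := hqm
  have hqK : q < K := by omega
  have hiK : (τ ⟨q, Nat.lt_of_succ_lt hqb⟩).val < K := by
    have := (τ ⟨q+1, hqb⟩).isLt
    omega
  set i : Fin K := ⟨(τ ⟨q, Nat.lt_of_succ_lt hqb⟩).val, hiK⟩ with hidef
  have hival : i.val = (τ ⟨q, Nat.lt_of_succ_lt hqb⟩).val := rfl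
  have hmemq : ∀ m, SuccAt (K+1) τ m → m = q := by
    intro m hm
    have := mem_sSet_iff.2 hm
    rw [hq] at this
    exact Finset.mem_singleton.1 this
  have hne : ∀ (m : ℕ) (hm : m < K+1), m ≠ q + 1 → (τ ⟨m, hm⟩).val ≠ i.val + 1 := by
    intro m hm hmq hcon
    have heq : τ ⟨m, hm⟩ = τ ⟨q+1, hqb⟩ :=
      Fin.ext (show (τ ⟨m, hm⟩).val = (τ ⟨q+1, hqb⟩).val by omega)
    have := congrArg Fin.val (τ.injective heq)
    simp only [Fin.val_mk] at this
    omega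
  have hg : Function.Injective (fun k : Fin K =>
      if k.val ≤ q then downF i (τ ⟨k.val, by have := k.isLt; omega⟩)
      else downF i (τ ⟨k.val + 1, by have := k.isLt; omega⟩)) := by
    intro a b hab
    simp only at hab
    have haK := a.isLt
    have hbK := b.isLt
    apply Fin.ext
    by_cases ha : a.val ≤ q <;> by_cases hb : b.val ≤ q
    · rw [if_pos ha, if_pos hb] at hab
      have := downF_inj' (hne a.val (by omega) (by omega)) (hne b.val (by omega) (by omega)) hab
      have := congrArg Fin.val (τ.injective this)
      simp only [Fin.val_mk] at this
      omega
    · rw [if_pos ha, if_neg hb] at hab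
      have := downF_inj' (hne a.val (by omega) (by omega)) (hne (b.val+1) (by omega) (by omega)) hab
      have := congrArg Fin.val (τ.injective this)
      simp only [Fin.val_mk] at this
      omega
    · rw [if_neg ha, if_pos hb] at hab
      have := downF_inj' (hne (a.val+1) (by omega) (by omega)) (hne b.val (by omega) (by omega)) hab
      have := congrArg Fin.val (τ.injective this)
      simp only [Fin.val_mk] at this
      omega
    · rw [if_neg ha, if_neg hb] at hab
      have := downF_inj' (hne (a.val+1) (by omega) (by omega)) (hne (b.val+1) (by omega) (by omega)) hab
      have := congrArg Fin.val (τ.injective this)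
      simp only [Fin.val_mk] at this
      omega
  obtain ⟨ρ, hρg⟩ : ∃ ρ : Equiv.Perm (Fin K),
      ∀ (m : ℕ) (hm : m < K) (hm2 : m < K+1) (hm3 : m+1 < K+1),
        ρ ⟨m, hm⟩ = if m ≤ q then downF i (τ ⟨m, hm2⟩) else downF i (τ ⟨m+1, hm3⟩) :=
    ⟨Equiv.ofBijective _ ((Finite.injective_iff_bijective).1 hg), fun m hm hm2 hm3 => rfl⟩
  have gval_le : ∀ (m : ℕ) (hm : m < K) (hm2 : m < K+1), m ≤ q →
      ρ ⟨m, hm⟩ = downF i (τ ⟨m, hm2⟩) := by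
    intro m hm hm2 hmq
    rw [hρg m hm hm2 (by omega), if_pos hmq]
  have gval_gt : ∀ (m : ℕ) (hm : m < K) (hm3 : m+1 < K+1), q < m →
      ρ ⟨m, hm⟩ = downF i (τ ⟨m+1, hm3⟩) := by
    intro m hm hm3 hmq
    rw [hρg m hm (by omega) hm3, if_neg (by omega)]
  have hρA : sSet K ρ = ∅ := by
    rw [Finset.eq_empty_iff_forall_notMem]
    rintro k hk
    rw [mem_sSet_iff] at hk
    obtain ⟨hkb, hkv⟩ := hk
    rcases lt_trichotomy k q with hc | hc | hc
    · have hb2 : k + 1 < K + 1 := by omega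
      have e1 : ρ ⟨k+1, hkb⟩ = downF i (τ ⟨k+1, hb2⟩) := gval_le (k+1) hkb hb2 (by omega)
      have e2 : ρ ⟨k, Nat.lt_of_succ_lt hkb⟩ = downF i (τ ⟨k, Nat.lt_of_succ_lt hb2⟩) :=
        gval_le k (Nat.lt_of_succ_lt hkb) (Nat.lt_of_succ_lt hb2) (by omega)
      rw [e1, e2] at hkv
      rcases (downF_succ_iff (τ ⟨k, Nat.lt_of_succ_lt hb2⟩) (τ ⟨k+1, hb2⟩)
          (hne k _ (by omega)) (hne (k+1) _ (by omega))).1 hkv with hL | hR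
      · have := hmemq k ⟨hb2, hL⟩
        omega
      · have heq : τ ⟨k, Nat.lt_of_succ_lt hb2⟩ = τ ⟨q, Nat.lt_of_succ_lt hqb⟩ :=
          Fin.ext (show _ = _ by omega)
        have := congrArg Fin.val (τ.injective heq)
        simp only [Fin.val_mk] at this
        omega
    · subst hc
      have hb2 : k + 1 + 1 < K + 1 := by omega
      have e1 : ρ ⟨k+1, hkb⟩ = downF i (τ ⟨k+1+1, hb2⟩) := gval_gt (k+1) hkb hb2 (by omega)
      have e2 : ρ ⟨k, Nat.lt_of_succ_lt hkb⟩ = downF i (τ ⟨k, Nat.lt_of_succ_lt hqb⟩) :=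
        gval_le k (Nat.lt_of_succ_lt hkb) (Nat.lt_of_succ_lt hqb) (le_refl k)
      rw [e1, e2] at hkv
      rcases (downF_succ_iff (τ ⟨k, Nat.lt_of_succ_lt hqb⟩) (τ ⟨k+1+1, hb2⟩)
          (hne k _ (by omega)) (hne (k+1+1) _ (by omega))).1 hkv with hL | hR
      · have := hne (k+1+1) hb2 (by omega)
        omega
      · have hq1 : (τ ⟨k+1, Nat.lt_of_succ_lt hb2⟩).val = i.val + 1 := by
          have h9 : (τ ⟨k+1, hqb⟩).val = i.val + 1 := by omega
          exact h9
        have hsucc : SuccAt (K+1) τ (k+1) := ⟨hb2, by omega⟩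
        have := hmemq (k+1) hsucc
        omega
    · have hb2 : k + 1 + 1 < K + 1 := by omega
      have e1 : ρ ⟨k+1, hkb⟩ = downF i (τ ⟨k+1+1, hb2⟩) := gval_gt (k+1) hkb hb2 (by omega)
      have e2 : ρ ⟨k, Nat.lt_of_succ_lt hkb⟩ = downF i (τ ⟨k+1, Nat.lt_of_succ_lt hb2⟩) :=
        gval_gt k (Nat.lt_of_succ_lt hkb) (Nat.lt_of_succ_lt hb2) hc
      rw [e1, e2] at hkv
      rcases (downF_succ_iff (τ ⟨k+1, Nat.lt_of_succ_lt hb2⟩) (τ ⟨k+1+1, hb2⟩)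
          (hne (k+1) _ (by omega)) (hne (k+1+1) _ (by omega))).1 hkv with hL | hR
      · have := hmemq (k+1) ⟨hb2, hL⟩
        omega
      · have heq : τ ⟨k+1, Nat.lt_of_succ_lt hb2⟩ = τ ⟨q, Nat.lt_of_succ_lt hqb⟩ :=
          Fin.ext (show _ = _ by omega)
        have := congrArg Fin.val (τ.injective heq)
        simp only [Fin.val_mk] at this
        omega
  have hsv : ρ ⟨q, hqK⟩ = i := by
    rw [gval_le q hqK (Nat.lt_of_succ_lt hqb) (le_refl q)]
    apply Fin.ext
    rw [downF_val_le (show (τ ⟨q, Nat.lt_of_succ_lt hqb⟩).val ≤ i.val by omega)]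
  have hs : ρ.symm i = ⟨q, hqK⟩ := by rw [← hsv, Equiv.symm_apply_apply]
  have hsval : (ρ.symm i).val = q := by rw [hs]
  refine ⟨i, ρ, hρA, ?_⟩
  apply Equiv.ext
  intro j
  apply Fin.ext
  have hjK := j.isLt
  rcases lt_trichotomy j.val (q+1) with hj | hj | hj
  · have hj3 : j.val < K := by omega
    have e1 : (expP i ρ) ⟨j.val, hjK⟩ = upF i (ρ ⟨j.val, hj3⟩) :=
      expP_apply_le i ρ j.val (by omega) hjK hj3
    have e2 : ρ ⟨j.val, hj3⟩ = downF i (τ ⟨j.val, hjK⟩) :=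
      gval_le j.val hj3 hjK (by omega)
    have e3 : upF i (downF i (τ ⟨j.val, hjK⟩)) = τ ⟨j.val, hjK⟩ :=
      up_down _ (hne j.val hjK (by omega))
    have final : (expP i ρ) ⟨j.val, hjK⟩ = τ ⟨j.val, hjK⟩ := by
      rw [e1, e2, e3]
    exact congrArg Fin.val final
  · have hb' : (ρ.symm i).val + 1 < K + 1 := by omega
    have hjj : j = ⟨(ρ.symm i).val + 1, hb'⟩ :=
      Fin.ext (show j.val = (ρ.symm i).val + 1 by omega)
    rw [hjj, expP_apply_mid i ρ hb']
    have hpos : (⟨(ρ.symm i).val + 1, hb'⟩ : Fin (K+1)) = ⟨q+1, hqb⟩ :=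
      Fin.ext (show (ρ.symm i).val + 1 = q + 1 by omega)
    rw [hpos]
    omega
  · have hj3 : j.val - 1 < K := by omega
    have hb1 : (j.val - 1) + 1 < K + 1 := by omega
    have hjj : j = ⟨(j.val - 1) + 1, hb1⟩ :=
      Fin.ext (show j.val = (j.val - 1) + 1 by omega)
    have e1 : (expP i ρ) ⟨(j.val - 1) + 1, hb1⟩ = upF i (ρ ⟨j.val - 1, hj3⟩) :=
      expP_apply_gt i ρ (j.val - 1) (by omega) hb1 hj3
    have e2 : ρ ⟨j.val - 1, hj3⟩ = downF i (τ ⟨(j.val - 1) + 1, hb1⟩) :=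
      gval_gt (j.val - 1) hj3 hb1 (by omega)
    have e3 : upF i (downF i (τ ⟨(j.val - 1) + 1, hb1⟩)) = τ ⟨(j.val - 1) + 1, hb1⟩ :=
      up_down _ (hne ((j.val - 1) + 1) hb1 (by omega))
    have final : (expP i ρ) ⟨(j.val - 1) + 1, hb1⟩ = τ ⟨(j.val - 1) + 1, hb1⟩ := by
      rw [e1, e2, e3]
    rw [hjj]
    exact congrArg Fin.val final

lemma R2 (K : ℕ) : (EFin (K+1)).card = K * (AFin K).card := by
  classical
  have key : ((Finset.univ : Finset (Fin K)) ×ˢ AFin K).card = (EFin (K+1)).card := by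
    apply Finset.card_bij (fun pr _ => expP pr.1 pr.2)
    · intro pr hpr
      have hρ : sSet K pr.2 = ∅ := mem_AFin_iff.1 (Finset.mem_product.1 hpr).2
      rw [mem_EFin_iff, sSet_expP pr.1 pr.2 hρ]
      exact Finset.card_singleton _
    · rintro ⟨i, ρ⟩ hpr ⟨i', ρ'⟩ hpr' h
      simp only at h
      have hρ : sSet K ρ = ∅ := mem_AFin_iff.1 (Finset.mem_product.1 hpr).2
      have hρ' : sSet K ρ' = ∅ := mem_AFin_iff.1 (Finset.mem_product.1 hpr').2
      have h1 := sSet_expP i ρ hρ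
      have h2 := sSet_expP i' ρ' hρ'
      rw [h, h2] at h1
      have hs : (ρ'.symm i').val = (ρ.symm i).val := Finset.singleton_injective h1
      have hbK := (ρ.symm i).isLt
      have hb1 : (ρ.symm i).val + 1 < K + 1 := by omega
      have hb2 : (ρ'.symm i').val + 1 < K + 1 := by omega
      have e1 := expP_apply_mid i ρ hb1
      rw [h] at e1
      have e2 : ((expP i' ρ') ⟨(ρ.symm i).val + 1, hb1⟩).val = i'.val + 1 := by
        have hpos : (⟨(ρ.symm i).val + 1, hb1⟩ : Fin (K+1))
            = ⟨(ρ'.symm i').val + 1, hb2⟩ :=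
          Fin.ext (show (ρ.symm i).val + 1 = (ρ'.symm i').val + 1 by omega)
        rw [hpos]
        exact expP_apply_mid i' ρ' hb2
      have hii : i = i' := Fin.ext (by omega)
      subst hii
      have hρρ : ρ = ρ' := by
        apply Equiv.ext
        intro k
        have hkK := k.isLt
        rcases le_or_gt k.val (ρ.symm i).val with hk | hk
        · have a1 : (expP i ρ) ⟨k.val, by omega⟩ = upF i (ρ ⟨k.val, hkK⟩) :=
            expP_apply_le i ρ k.val hk (by omega) hkK
          have a2 : (expP i ρ') ⟨k.val, by omega⟩ = upF i (ρ' ⟨k.val, hkK⟩) :=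
            expP_apply_le i ρ' k.val (by omega) (by omega) hkK
          rw [h] at a1
          rw [a2] at a1
          have := upF_inj i a1.symm
          have : ρ ⟨k.val, hkK⟩ = ρ' ⟨k.val, hkK⟩ := this
          exact this
        · have a1 : (expP i ρ) ⟨k.val + 1, by omega⟩ = upF i (ρ ⟨k.val, hkK⟩) :=
            expP_apply_gt i ρ k.val hk (by omega) hkK
          have a2 : (expP i ρ') ⟨k.val + 1, by omega⟩ = upF i (ρ' ⟨k.val, hkK⟩) :=
            expP_apply_gt i ρ' k.val (by omega) (by omega) hkK
          rw [h] at a1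
          rw [a2] at a1
          exact upF_inj i a1.symm
      rw [hρρ]
    · intro τ hτ
      obtain ⟨i, ρ, hρA, hexp⟩ := expP_surj_onto_E τ (mem_EFin_iff.1 hτ)
      exact ⟨(i, ρ), Finset.mem_product.2 ⟨Finset.mem_univ _, mem_AFin_iff.2 hρA⟩, hexp⟩
  rw [← key, Finset.card_product, Finset.card_univ, Fintype.card_fin]

lemma sSet_one (σ : Equiv.Perm (Fin 1)) : sSet 1 σ = ∅ := by
  rw [Finset.eq_empty_iff_forall_notMem]
  intro k hk
  obtain ⟨h, -⟩ := mem_sSet_iff.1 hk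
  omega

lemma AFin_one : (AFin 1).card = 1 := by
  have h : AFin 1 = Finset.univ := by
    ext σ
    simp only [mem_AFin_iff, sSet_one σ, Finset.mem_univ]
  rw [h, Finset.card_univ, Fintype.card_perm, Fintype.card_fin, Nat.factorial_one]

lemma EFin_one : (EFin 1).card = 0 := by
  rw [Finset.card_eq_zero, Finset.eq_empty_iff_forall_notMem]
  intro σ hσ
  have := mem_EFin_iff.1 hσ
  rw [sSet_one σ] at this
  simp at this

lemma AFin_two : (AFin 2).card = 1 := by
  rw [R1 1 (le_refl 1), AFin_one, EFin_one]

lemma AFin_rec (K : ℕ) :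
    (AFin (K+2)).card = (K+1) * (AFin (K+1)).card + K * (AFin K).card := by
  rw [R1 (K+1) (by omega), R2 K]

lemma main_der : ∀ m : ℕ, numDerangements (m+2) = (m+1) * (AFin (m+1)).card := by
  intro m
  induction m using Nat.strong_induction_on with
  | _ m ih =>
    match m with
    | 0 =>
      rw [numDerangements_add_two, numDerangements_zero, numDerangements_one, AFin_one]
    | 1 =>
      rw [show (1:ℕ)+2 = 1+2 from rfl, numDerangements_add_two, numDerangements_one,
        numDerangements_add_two, numDerangements_zero, numDerangements_one, AFin_two]
    | (k+2) =>
      have e1 : numDerangements (k+2+2) = (k+2+1) * (numDerangements (k+2) + numDerangements (k+2+1)) :=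
        numDerangements_add_two (k+2)
      have i1 : numDerangements (k+2) = (k+1) * (AFin (k+1)).card := ih k (by omega)
      have i2 : numDerangements (k+1+2) = (k+2) * (AFin (k+2)).card := ih (k+1) (by omega)
      have i2' : numDerangements (k+2+1) = (k+2) * (AFin (k+2)).card := i2
      have r := AFin_rec (k+1)
      rw [e1, i1, i2', show k+2+1 = (k+1)+2 from rfl, r]
      ring

theorem stmt_11 (n : ℕ) (hn : 2 ≤ n) :
    numDerangements n = (n - 1) * dCount (n - 1) := by
  obtain ⟨m, rfl⟩ : ∃ m, n = m + 2 := ⟨n - 2, by omega⟩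
  have h1 : m + 2 - 1 = m + 1 := by omega
  rw [h1, dCount_eq, main_der m]
end
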